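/- arXiv:1403.5510 — 5 statements merged into one kernel-verified Lean document; each statement's English description precedes it below -/
import Mathlib

section
/- Assume the sequence (b_h) is constant with value b ≠ 0 and that R_{ℓ_0} = 0 for some ℓ_0 ∈ ℤ. Then the number R_{ℓ_0,2} = Σ' b/R_{k·2^h+ℓ_0} (summation over h ≥ 0 with k·2^h+ℓ_0 ≥ 0 and R_{k·2^h+ℓ_0} ≠ 0) is an algebraic number. -/
noncomputable section

lemma isAlgebraic_zpow_aux {x : ℂ} (hx : IsAlgebraic ℚ x) (z : ℤ) :
    IsAlgebraic ℚ (x ^ z) := by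
  rw [isAlgebraic_iff_isIntegral] at hx ⊢
  cases z with
  | ofNat n => simpa using hx.pow n
  | negSucc n => rw [zpow_negSucc]; exact (hx.pow (n + 1)).inv

theorem isAlgebraic_R_sum_constant_case
    (γ₁ γ₂ δ g₁ g₂ : ℂ)
    (hγ₁ : γ₁ ≠ 0) (hγ₂ : γ₂ ≠ 0) (hg₁ : g₁ ≠ 0) (hg₂ : g₂ ≠ 0)
    (hγ₁alg : IsAlgebraic ℚ γ₁) (hγ₂alg : IsAlgebraic ℚ γ₂)
    (hg₁alg : IsAlgebraic ℚ g₁) (hg₂alg : IsAlgebraic ℚ g₂)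
    (hγ₁abs : 1 < ‖γ₁‖)
    (hδ : γ₁ * γ₂ = δ) (hδ1 : δ = 1 ∨ δ = -1)
    (k : ℕ) (hk : 1 ≤ k)
    (b : ℂ) (hb : b ≠ 0) (hb_alg : IsAlgebraic ℚ b)
    (ℓ₀ : ℤ) (hℓ₀ : g₁ * γ₁ ^ ℓ₀ + g₂ * γ₂ ^ ℓ₀ = 0) :
    IsAlgebraic ℚ
      (∑' h : ℕ,
        if 0 ≤ (k * 2 ^ h + ℓ₀ : ℤ) ∧
            g₁ * γ₁ ^ (k * 2 ^ h + ℓ₀ : ℤ) + g₂ * γ₂ ^ (k * 2 ^ h + ℓ₀ : ℤ) ≠ 0 then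
          b / (g₁ * γ₁ ^ (k * 2 ^ h + ℓ₀ : ℤ) + g₂ * γ₂ ^ (k * 2 ^ h + ℓ₀ : ℤ))
        else 0) := by
  classical
  -- basic facts
  obtain ⟨c, hcdef⟩ : ∃ c : ℂ, c = g₁ * γ₁ ^ ℓ₀ := ⟨_, rfl⟩
  have hc : c ≠ 0 := hcdef ▸ mul_ne_zero hg₁ (zpow_ne_zero _ hγ₁)
  have hg₂γ : g₂ * γ₂ ^ ℓ₀ = -c := by rw [hcdef]; linear_combination hℓ₀
  have hδ2 : δ ^ 2 = 1 := by rcases hδ1 with h | h <;> simp [h]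
  have hδabs : ‖δ‖ = 1 := by rcases hδ1 with h | h <;> simp [h]
  have hγ₂abs : ‖γ₂‖ < 1 := by
    have h1 : ‖γ₁‖ * ‖γ₂‖ = 1 := by
      rw [← norm_mul, hδ, hδabs]
    nlinarith [norm_nonneg γ₂]
  obtain ⟨X, hXdef⟩ : ∃ X : ℝ, X = ‖γ₁‖ ^ k := ⟨_, rfl⟩
  have hX1 : 1 < X := hXdef ▸ one_lt_pow₀ hγ₁abs (by omega)
  have hXpos : 0 < X := lt_trans one_pos hX1
  -- absolute values of powers
  have habsγm : ∀ h : ℕ, ‖γ₁ ^ (k * 2 ^ h)‖ = X ^ 2 ^ h := by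
    intro h; rw [norm_pow, hXdef, ← pow_mul]
  have hXpow : ∀ h : ℕ, 1 < X ^ 2 ^ h := fun h =>
    one_lt_pow₀ hX1 (by positivity)
  have habsγ₂m : ∀ h : ℕ, ‖γ₂ ^ (k * 2 ^ h)‖ ≤ 1 := by
    intro h; rw [norm_pow]
    exact pow_le_one₀ (norm_nonneg _) hγ₂abs.le
  -- key lower bound : X ^ h * (X - 1) ≤ X ^ 2 ^ h - 1
  have hXh : ∀ h : ℕ, X ^ h * (X - 1) ≤ X ^ 2 ^ h - 1 := by
    intro h
    have h1 : X ^ (h + 1) ≤ X ^ 2 ^ h :=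
      pow_le_pow_right₀ hX1.le (Nat.succ_le_of_lt (Nat.lt_two_pow_self (n := h)))
    have h2 : (1 : ℝ) ≤ X ^ h := one_le_pow₀ hX1.le
    have h3 : X ^ (h + 1) = X ^ h * X := pow_succ X h
    nlinarith
  have hXhpos : ∀ h : ℕ, 0 < X ^ h * (X - 1) := by
    intro h; exact mul_pos (pow_pos hXpos h) (by linarith)
  -- nonvanishing of γ₁ ^ m ± 1
  have hne1 : ∀ h : ℕ, γ₁ ^ (k * 2 ^ h) - 1 ≠ 0 := by
    intro h hcon
    rw [sub_eq_zero] at hcon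
    have h1 := habsγm h
    rw [hcon, norm_one] at h1
    linarith [hXpow h]
  have hne1' : ∀ h : ℕ, γ₁ ^ (k * 2 ^ h) + 1 ≠ 0 := by
    intro h hcon
    have hcon' : γ₁ ^ (k * 2 ^ h) = -1 := by linear_combination hcon
    have h1 := habsγm h
    rw [hcon'] at h1
    simp only [norm_neg, norm_one] at h1
    linarith [hXpow h]
  -- difference of powers nonzero
  have hdiff : ∀ h : ℕ, γ₁ ^ (k * 2 ^ h) - γ₂ ^ (k * 2 ^ h) ≠ 0 := by
    intro h hcon
    rw [sub_eq_zero] at hcon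
    have h1 := habsγm h
    have h2 := habsγ₂m h
    rw [hcon] at h1
    linarith [hXpow h]
  -- lower bound for the norm of the difference
  have hdiff_lb : ∀ h : ℕ, X ^ h * (X - 1) ≤ ‖γ₁ ^ (k * 2 ^ h) - γ₂ ^ (k * 2 ^ h)‖ := by
    intro h
    have h1 : X ^ 2 ^ h - 1 ≤ ‖γ₁ ^ (k * 2 ^ h) - γ₂ ^ (k * 2 ^ h)‖ := by
      have hns := norm_sub_norm_le (γ₁ ^ (k * 2 ^ h)) (γ₂ ^ (k * 2 ^ h))
      rw [habsγm h] at hns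
      linarith [habsγ₂m h]
    linarith [hXh h]
  -- the simplified term
  set G : ℕ → ℂ := fun h =>
    if 0 ≤ (k * 2 ^ h + ℓ₀ : ℤ) then
      b / (c * (γ₁ ^ (k * 2 ^ h) - γ₂ ^ (k * 2 ^ h))) else 0 with hGdef
  -- denominator identity
  have hDform : ∀ h : ℕ,
      g₁ * γ₁ ^ (k * 2 ^ h + ℓ₀ : ℤ) + g₂ * γ₂ ^ (k * 2 ^ h + ℓ₀ : ℤ) =
        c * (γ₁ ^ (k * 2 ^ h) - γ₂ ^ (k * 2 ^ h)) := by
    intro h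
    have hcast : ((k : ℤ) * 2 ^ h + ℓ₀) = ((k * 2 ^ h : ℕ) : ℤ) + ℓ₀ := by push_cast; ring
    rw [hcast, zpow_add₀ hγ₁, zpow_add₀ hγ₂, zpow_natCast, zpow_natCast]
    linear_combination γ₂ ^ (k * 2 ^ h) * hg₂γ + γ₁ ^ (k * 2 ^ h) * hcdef.symm
  have hDne : ∀ h : ℕ,
      g₁ * γ₁ ^ (k * 2 ^ h + ℓ₀ : ℤ) + g₂ * γ₂ ^ (k * 2 ^ h + ℓ₀ : ℤ) ≠ 0 := by
    intro h; rw [hDform h]; exact mul_ne_zero hc (hdiff h)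
  -- rewrite the sum
  have hFG : ∀ h : ℕ,
      (if 0 ≤ (k * 2 ^ h + ℓ₀ : ℤ) ∧
          g₁ * γ₁ ^ (k * 2 ^ h + ℓ₀ : ℤ) + g₂ * γ₂ ^ (k * 2 ^ h + ℓ₀ : ℤ) ≠ 0 then
        b / (g₁ * γ₁ ^ (k * 2 ^ h + ℓ₀ : ℤ) + g₂ * γ₂ ^ (k * 2 ^ h + ℓ₀ : ℤ))
      else 0) = G h := by
    intro h
    by_cases h0 : 0 ≤ (k * 2 ^ h + ℓ₀ : ℤ)
    · rw [if_pos ⟨h0, hDne h⟩, hGdef]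
      simp only [if_pos h0]
      rw [hDform h]
    · rw [if_neg (fun hcon => h0 hcon.1), hGdef]
      simp only [if_neg h0]
  rw [tsum_congr hFG]
  -- norm bound on G
  set C : ℝ := ‖b‖ / (‖c‖ * (X - 1)) with hCdef
  have hCpos : 0 < ‖c‖ * (X - 1) := by
    have : 0 < ‖c‖ := norm_pos_iff.mpr hc
    nlinarith
  have hGbound : ∀ h : ℕ, ‖G h‖ ≤ C * (X⁻¹) ^ h := by
    intro h
    have hXh0 : X ^ h ≠ 0 := (pow_pos hXpos h).ne'
    have hrhs : C * (X⁻¹) ^ h =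
        ‖b‖ / (‖c‖ * (X ^ h * (X - 1))) := by
      rw [hCdef, inv_pow, ← div_eq_mul_inv, div_div]
      congr 1
      ring
    rw [hrhs, hGdef]
    by_cases h0 : 0 ≤ (k * 2 ^ h + ℓ₀ : ℤ)
    · simp only [if_pos h0]
      rw [norm_div, norm_mul]
      exact div_le_div_of_nonneg_left (norm_nonneg b)
        (mul_pos (norm_pos_iff.mpr hc) (hXhpos h))
        (mul_le_mul_of_nonneg_left (hdiff_lb h) (norm_nonneg c))
    · simp only [if_neg h0, norm_zero]
      exact div_nonneg (norm_nonneg b)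
        (le_of_lt (mul_pos (norm_pos_iff.mpr hc) (hXhpos h)))
  have hgeo : Summable (fun h : ℕ => C * (X⁻¹) ^ h) :=
    (summable_geometric_of_lt_one (by positivity) (inv_lt_one_of_one_lt₀ hX1)).mul_left C
  have hGsum : Summable G := Summable.of_norm_bounded hgeo hGbound
  -- the telescoping auxiliary sequence
  set u : ℕ → ℂ := fun h => (γ₁ ^ (k * 2 ^ h) - 1)⁻¹ with hudef
  -- telescoping identity
  have htel : ∀ j : ℕ, 1 ≤ j → 0 ≤ (k * 2 ^ j + ℓ₀ : ℤ) →
      G j = (b / c) * (u j - u (j + 1)) := by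
    intro j hj h0
    obtain ⟨t, rfl⟩ : ∃ t, j = t + 1 := ⟨j - 1, by omega⟩
    have hprod : γ₁ ^ (k * 2 ^ (t + 1)) * γ₂ ^ (k * 2 ^ (t + 1)) = 1 := by
      rw [← mul_pow, hδ]
      have : k * 2 ^ (t + 1) = 2 * (k * 2 ^ t) := by ring
      rw [this, pow_mul, hδ2, one_pow]
    have hy0 : γ₁ ^ (k * 2 ^ (t + 1)) ≠ 0 := pow_ne_zero _ hγ₁
    have hγ₂eq : γ₂ ^ (k * 2 ^ (t + 1)) = (γ₁ ^ (k * 2 ^ (t + 1)))⁻¹ :=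
      eq_inv_of_mul_eq_one_right (by linear_combination hprod)
    have hsq : γ₁ ^ (k * 2 ^ (t + 2)) = (γ₁ ^ (k * 2 ^ (t + 1))) ^ 2 := by
      rw [← pow_mul]; ring_nf
    have hy1 : γ₁ ^ (k * 2 ^ (t + 1)) - 1 ≠ 0 := hne1 (t + 1)
    have hy1' : γ₁ ^ (k * 2 ^ (t + 1)) + 1 ≠ 0 := hne1' (t + 1)
    rw [hGdef]
    simp only [if_pos h0]
    rw [hudef]
    simp only [hγ₂eq, hsq]
    generalize γ₁ ^ (k * 2 ^ (t + 1)) = y at hy0 hy1 hy1' ⊢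
    have hy2 : y ^ 2 - 1 ≠ 0 := by
      have he : y ^ 2 - 1 = (y - 1) * (y + 1) := by ring
      rw [he]; exact mul_ne_zero hy1 hy1'
    have e0 : y - y⁻¹ = (y ^ 2 - 1) / y := by
      rw [eq_div_iff hy0, sub_mul, inv_mul_cancel₀ hy0]
      ring
    have e1 : c * (y - y⁻¹) = c * (y ^ 2 - 1) / y := by
      rw [e0, mul_div_assoc]
    have e2 : (y - 1)⁻¹ - (y ^ 2 - 1)⁻¹ = y / (y ^ 2 - 1) := by
      field_simp
      ring
    rw [e1, div_div_eq_mul_div, e2, div_mul_div_comm]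
  -- choice of N
  set N : ℕ := max 1 ℓ₀.natAbs with hNdef
  have hN1 : 1 ≤ N := le_max_left _ _
  have hcond : ∀ h : ℕ, N ≤ h → 0 ≤ (k * 2 ^ h + ℓ₀ : ℤ) := by
    intro h hh
    have h1 : ℓ₀.natAbs < 2 ^ h :=
      lt_of_le_of_lt (le_trans (le_max_right 1 _) hh) (Nat.lt_two_pow_self (n := h))
    have h2 : (ℓ₀.natAbs : ℤ) < (2 : ℤ) ^ h := by exact_mod_cast h1
    have h3 : (1 : ℤ) ≤ (k : ℤ) := by exact_mod_cast hk
    have h4 : (2 : ℤ) ^ h ≤ (k : ℤ) * 2 ^ h :=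
      le_mul_of_one_le_left (by positivity) h3
    have h5 : -ℓ₀ ≤ (ℓ₀.natAbs : ℤ) := by omega
    linarith
  -- limit of u
  have hu_bound : ∀ j : ℕ, ‖u j‖ ≤ (X - 1)⁻¹ * (X⁻¹) ^ j := by
    intro j
    have hrhs : (X - 1)⁻¹ * (X⁻¹) ^ j = (X ^ j * (X - 1))⁻¹ := by
      rw [mul_inv, inv_pow]; ring
    rw [hrhs, hudef]
    simp only [norm_inv]
    apply inv_anti₀ (hXhpos j)
    calc X ^ j * (X - 1) ≤ X ^ 2 ^ j - 1 := hXh j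
      _ ≤ ‖γ₁ ^ (k * 2 ^ j) - 1‖ := by
          have hns := norm_sub_norm_le (γ₁ ^ (k * 2 ^ j)) (1 : ℂ)
          rw [habsγm j] at hns
          simpa using hns
  have hu0 : Filter.Tendsto u Filter.atTop (nhds 0) := by
    rw [tendsto_zero_iff_norm_tendsto_zero]
    apply squeeze_zero (fun n => norm_nonneg _) hu_bound
    have : Filter.Tendsto (fun j : ℕ => (X⁻¹) ^ j) Filter.atTop (nhds 0) :=
      tendsto_pow_atTop_nhds_zero_of_lt_one (by positivity) (inv_lt_one_of_one_lt₀ hX1)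
    simpa using this.const_mul ((X - 1)⁻¹)
  -- tail sum value
  have htail_sum : Summable (fun i => G (i + N)) := (summable_nat_add_iff N).2 hGsum
  have hps : ∀ n : ℕ, ∑ i ∈ Finset.range n, G (i + N) = (b / c) * (u N - u (n + N)) := by
    intro n
    have h1 : ∀ i ∈ Finset.range n, G (i + N) =
        (b / c) * (u (i + N) - u (i + 1 + N)) := by
      intro i _
      have he : i + N + 1 = i + 1 + N := by omega
      have := htel (i + N) (by omega) (hcond _ (by omega))
      rw [this, he]
    rw [Finset.sum_congr rfl h1, ← Finset.mul_sum]
    congr 1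
    have hts := Finset.sum_range_sub' (fun i => u (i + N)) n
    simp only [Nat.zero_add] at hts
    rw [← hts]
  have htail_val : ∑' i, G (i + N) = (b / c) * u N := by
    have h1 := htail_sum.hasSum.tendsto_sum_nat
    have h2 : Filter.Tendsto (fun n => ∑ i ∈ Finset.range n, G (i + N))
        Filter.atTop (nhds ((b / c) * (u N - 0))) := by
      simp_rw [hps]
      exact (tendsto_const_nhds.sub (hu0.comp (Filter.tendsto_add_atTop_nat N))).const_mul _
    have h3 := tendsto_nhds_unique h1 h2
    rw [sub_zero] at h3
    exact h3
  -- assemble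
  have hsplit := Summable.sum_add_tsum_nat_add (f := G) N hGsum
  rw [← hsplit, htail_val]
  -- algebraicity
  rw [isAlgebraic_iff_isIntegral]
  have hint : ∀ x : ℂ, IsAlgebraic ℚ x → IsIntegral ℚ x :=
    fun x hx => isAlgebraic_iff_isIntegral.mp hx
  have hγ₁i : IsIntegral ℚ γ₁ := hint _ hγ₁alg
  have hγ₂i : IsIntegral ℚ γ₂ := hint _ hγ₂alg
  have hbi : IsIntegral ℚ b := hint _ hb_alg
  have hci : IsIntegral ℚ c := by
    rw [hcdef]
    exact (hint _ hg₁alg).mul (hint _ (isAlgebraic_zpow_aux hγ₁alg ℓ₀))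
  have hGi : ∀ h : ℕ, IsIntegral ℚ (G h) := by
    intro h
    rw [hGdef]
    by_cases h0 : 0 ≤ (k * 2 ^ h + ℓ₀ : ℤ)
    · simp only [if_pos h0]
      rw [div_eq_mul_inv]
      exact hbi.mul (((hci.mul ((hγ₁i.pow _).sub (hγ₂i.pow _)))).inv)
    · simp only [if_neg h0]
      exact isIntegral_zero
  have huNi : IsIntegral ℚ (u N) := by
    rw [hudef]
    exact ((hγ₁i.pow _).sub isIntegral_one).inv
  have hbci : IsIntegral ℚ (b / c) := by
    rw [div_eq_mul_inv]; exact hbi.mul hci.inv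
  exact (IsIntegral.sum _ (fun i _ => hGi i)).add (hbci.mul huNi)
end
end

section
/- Let r ≥ 2 be an integer, a a non-zero complex number, and m ≥ 1. Let A_i, B_i ∈ ℂ[z]∖{0} (i = 0,…,m) with A_i(0) = 0 for all i, B_0 = 1, and, for each i = 1,…,m, A_i and B_i coprime and B_i non-constant monic, the polynomials B_1,…,B_m being pairwise distinct. Suppose that for each i = 1,…,m the polynomial B_i has exactly t_i distinct complex zeros, all of the same absolute value ω_i; suppose ω_1,…,ω_m are pairwise distinct, ω_m = 1, and, in case m ≥ 2, that (r−1)t_i ≥ t_j for every pair (i,j) with 1 ≤ i,j ≤ m−1. Define F_i(z) := Σ_{h≥0} a^h A_i(z^{r^h})/B_i(z^{r^h}) ∈ ℂ[[z]]. Then for any u_0,…,u_m ∈ ℂ, the power series u_0F_0(z) + u_1F_1(z) + ⋯ + u_mF_m(z) is rational if and only if u_1 = ⋯ = u_{m−1} = 0 and u_0F_0(z) + u_mF_m(z) is rational. -/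
noncomputable section

/-- A formal power series is rational if it satisfies `Q·g = P` for polynomials `P, Q`, `Q ≠ 0`. -/
def IsRationalPS (g : PowerSeries ℂ) : Prop :=
  ∃ P Q : Polynomial ℂ, Q ≠ 0 ∧ (Q : PowerSeries ℂ) * g = (P : PowerSeries ℂ)

/-- The formal sum of a sequence of power series, defined coefficientwise by a `tsum`
(which is a genuine finite sum in each coefficient, when the orders tend to infinity). -/
def seriesSum (t : ℕ → PowerSeries ℂ) : PowerSeries ℂ :=
  PowerSeries.mk fun n => ∑' h : ℕ, PowerSeries.coeff n (t h)

namespace Lemma1Aux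

open Polynomial PowerSeries Finset

/-- auxiliary sum reindexing for the expansion homomorphism -/
lemma sum_antidiag_expand (r d : ℕ) (hr : 0 < r) (F G : ℕ → ℂ) :
    ∑ p ∈ Finset.HasAntidiagonal.antidiagonal (r * d),
      (if r ∣ p.1 then F (p.1 / r) else 0) * (if r ∣ p.2 then G (p.2 / r) else 0)
      = ∑ p ∈ Finset.HasAntidiagonal.antidiagonal d, F p.1 * G p.2 := by
  classical
  rw [← Finset.sum_subset
    (Finset.filter_subset (fun p : ℕ × ℕ => r ∣ p.1 ∧ r ∣ p.2) (Finset.HasAntidiagonal.antidiagonal (r * d)))]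
  · refine Finset.sum_bij' (fun p _ => (p.1 / r, p.2 / r)) (fun q _ => (r * q.1, r * q.2))
      ?_ ?_ ?_ ?_ ?_
    · intro p hp
      simp only [Finset.mem_filter, Finset.HasAntidiagonal.mem_antidiagonal] at hp
      obtain ⟨hsum, h1, h2⟩ := hp
      simp only [Finset.HasAntidiagonal.mem_antidiagonal]
      apply Nat.eq_of_mul_eq_mul_left hr
      rw [Nat.mul_add, Nat.mul_div_cancel' h1, Nat.mul_div_cancel' h2]
      exact hsum
    · intro q hq
      simp only [Finset.HasAntidiagonal.mem_antidiagonal] at hq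
      simp only [Finset.mem_filter, Finset.HasAntidiagonal.mem_antidiagonal]
      exact ⟨by rw [← Nat.mul_add, hq], Dvd.intro _ rfl, Dvd.intro _ rfl⟩
    · intro p hp
      simp only [Finset.mem_filter] at hp
      obtain ⟨_, h1, h2⟩ := hp
      have e1 := Nat.mul_div_cancel' h1
      have e2 := Nat.mul_div_cancel' h2
      exact Prod.ext e1 e2
    · intro q hq
      simp [Nat.mul_div_cancel_left _ hr]
    · intro p hp
      simp only [Finset.mem_filter] at hp
      obtain ⟨_, h1, h2⟩ := hp
      rw [if_pos h1, if_pos h2]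
  · intro p hp hnp
    simp only [Finset.mem_filter, hp, true_and] at hnp
    rcases Classical.em (r ∣ p.1) with h1 | h1
    · rw [if_neg (fun h2 => hnp ⟨h1, h2⟩), mul_zero]
    · rw [if_neg h1, zero_mul]

/-- The substitution `z ↦ z^r` as a ring homomorphism of power series. -/
def expandPS (r : ℕ) (hr : 0 < r) : PowerSeries ℂ →+* PowerSeries ℂ where
  toFun f := PowerSeries.mk fun n => if r ∣ n then PowerSeries.coeff (n / r) f else 0
  map_one' := by
    ext n
    simp only [PowerSeries.coeff_mk, PowerSeries.coeff_one]
    rcases eq_or_ne n 0 with rfl | hn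
    · simp
    · rw [if_neg hn]
      split_ifs with h h2
      · exfalso
        apply hn
        obtain ⟨c, rfl⟩ := h
        rw [Nat.mul_div_cancel_left _ hr] at h2
        rw [h2, mul_zero]
      · rfl
      · rfl
  map_mul' f g := by
    ext n
    simp only [PowerSeries.coeff_mk, PowerSeries.coeff_mul]
    by_cases hn : r ∣ n
    · obtain ⟨d, rfl⟩ := hn
      rw [if_pos (dvd_mul_right r d), Nat.mul_div_cancel_left _ hr]
      exact (sum_antidiag_expand r d hr (fun i => PowerSeries.coeff i f)
        (fun i => PowerSeries.coeff i g)).symm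
    · rw [if_neg hn]
      symm
      apply Finset.sum_eq_zero
      intro p hp
      simp only [Finset.HasAntidiagonal.mem_antidiagonal] at hp
      by_cases h1 : r ∣ p.1
      · rw [if_neg (fun h2 => hn (hp ▸ Nat.dvd_add h1 h2)), mul_zero]
      · rw [if_neg h1, zero_mul]
  map_zero' := by
    ext n
    simp [PowerSeries.coeff_mk]
  map_add' f g := by
    ext n
    simp only [PowerSeries.coeff_mk, map_add]
    split_ifs <;> simp

lemma coeff_expandPS (r : ℕ) (hr : 0 < r) (f : PowerSeries ℂ) (n : ℕ) :
    PowerSeries.coeff n (expandPS r hr f) =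
      if r ∣ n then PowerSeries.coeff (n / r) f else 0 := by
  have h : expandPS r hr f
      = PowerSeries.mk fun k => if r ∣ k then PowerSeries.coeff (k / r) f else 0 := rfl
  rw [h, PowerSeries.coeff_mk]

lemma expandPS_coe (r : ℕ) (hr : 0 < r) (p : Polynomial ℂ) :
    expandPS r hr (p : PowerSeries ℂ) = ((Polynomial.expand ℂ r p : Polynomial ℂ) : PowerSeries ℂ) := by
  ext n
  simp [coeff_expandPS, Polynomial.coeff_coe, Polynomial.coeff_expand hr]

lemma expandPS_C (r : ℕ) (hr : 0 < r) (c : ℂ) :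
    expandPS r hr (PowerSeries.C c) = PowerSeries.C c := by
  rw [← Polynomial.coe_C, expandPS_coe, Polynomial.expand_C]

lemma constantCoeff_expandPS (r : ℕ) (hr : 0 < r) (f : PowerSeries ℂ) :
    PowerSeries.constantCoeff (expandPS r hr f) = PowerSeries.constantCoeff f := by
  rw [← PowerSeries.coeff_zero_eq_constantCoeff_apply, ← PowerSeries.coeff_zero_eq_constantCoeff_apply,
    coeff_expandPS, if_pos (dvd_zero r), Nat.zero_div]

lemma expandPS_inv (r : ℕ) (hr : 0 < r) (f : PowerSeries ℂ)
    (hf : PowerSeries.constantCoeff f ≠ 0) :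
    expandPS r hr f⁻¹ = (expandPS r hr f)⁻¹ := by
  have h2 : PowerSeries.constantCoeff (expandPS r hr f) ≠ 0 := by
    rwa [constantCoeff_expandPS]
  rw [PowerSeries.eq_inv_iff_mul_eq_one h2, ← map_mul, PowerSeries.inv_mul_cancel f hf, map_one]

lemma coeff_seriesSum (t : ℕ → PowerSeries ℂ) (n : ℕ) :
    PowerSeries.coeff n (seriesSum t) = ∑' h : ℕ, PowerSeries.coeff n (t h) :=
  PowerSeries.coeff_mk _ _

lemma summable_coeff {t : ℕ → PowerSeries ℂ} (hfin : ∀ n h, n < h → PowerSeries.coeff n (t h) = 0)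
    (n : ℕ) : Summable (fun h => PowerSeries.coeff n (t h)) := by
  apply summable_of_ne_finset_zero (s := Finset.range (n + 1))
  intro h hh
  simp only [Finset.mem_range, not_lt] at hh
  exact hfin n h (by omega)

lemma seriesSum_shift (t : ℕ → PowerSeries ℂ)
    (hfin : ∀ n h, n < h → PowerSeries.coeff n (t h) = 0) :
    seriesSum t = t 0 + seriesSum (fun h => t (h + 1)) := by
  ext n
  rw [map_add, coeff_seriesSum, coeff_seriesSum, Summable.tsum_eq_zero_add (summable_coeff hfin n)]

lemma seriesSum_C_mul (c : ℂ) (t : ℕ → PowerSeries ℂ) :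
    seriesSum (fun h => PowerSeries.C c * t h) = PowerSeries.C c * seriesSum t := by
  ext n
  rw [coeff_seriesSum, PowerSeries.coeff_C_mul, coeff_seriesSum, ← tsum_mul_left]
  exact tsum_congr fun h => PowerSeries.coeff_C_mul _ _ _

lemma expandPS_seriesSum (r : ℕ) (hr : 0 < r) (t : ℕ → PowerSeries ℂ) :
    expandPS r hr (seriesSum t) = seriesSum (fun h => expandPS r hr (t h)) := by
  ext n
  rw [coeff_expandPS, coeff_seriesSum]
  by_cases hd : r ∣ n
  · rw [if_pos hd, coeff_seriesSum]
    exact tsum_congr fun h => by rw [coeff_expandPS, if_pos hd]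
  · rw [if_neg hd]
    symm
    calc PowerSeries.coeff n (seriesSum fun h => expandPS r hr (t h))
        = ∑' _ : ℕ, (0 : ℂ) := by
          rw [coeff_seriesSum]
          exact tsum_congr fun h => by rw [coeff_expandPS, if_neg hd]
      _ = 0 := tsum_zero

lemma rm_pow (η : ℂ) (q : Polynomial ℂ) (k : ℕ) :
    Polynomial.rootMultiplicity η (q ^ k) = k * Polynomial.rootMultiplicity η q := by
  classical
  rw [← Polynomial.count_roots, Polynomial.roots_pow, Multiset.count_nsmul,
    Polynomial.count_roots]

lemma rm_X_pow_sub (r : ℕ) (hr : 2 ≤ r) {η : ℂ} (hη : η ≠ 0) :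
    Polynomial.rootMultiplicity η ((Polynomial.X : Polynomial ℂ) ^ r - Polynomial.C (η ^ r)) = 1 := by
  have hrpos : 0 < r := by omega
  have hne : ((Polynomial.X : Polynomial ℂ) ^ r - Polynomial.C (η ^ r)) ≠ 0 :=
    Polynomial.X_pow_sub_C_ne_zero hrpos _
  have hroot : Polynomial.IsRoot ((Polynomial.X : Polynomial ℂ) ^ r - Polynomial.C (η ^ r)) η := by
    simp [Polynomial.IsRoot]
  have h1 : 1 ≤ Polynomial.rootMultiplicity η ((Polynomial.X : Polynomial ℂ) ^ r - Polynomial.C (η ^ r)) :=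
    (Polynomial.rootMultiplicity_pos hne).mpr hroot
  have hsep : ((Polynomial.X : Polynomial ℂ) ^ r - Polynomial.C (η ^ r)).Separable :=
    Polynomial.separable_X_pow_sub_C _ (by
      simp only [ne_eq, Nat.cast_eq_zero]
      omega) (pow_ne_zero _ hη)
  have h2 : Polynomial.rootMultiplicity η ((Polynomial.X : Polynomial ℂ) ^ r - Polynomial.C (η ^ r)) ≤ 1 := by
    by_contra hgt
    push_neg at hgt
    have hdvd : (Polynomial.X - Polynomial.C η) * (Polynomial.X - Polynomial.C η) ∣
        (Polynomial.X : Polynomial ℂ) ^ r - Polynomial.C (η ^ r) := by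
      rw [← sq]
      exact (pow_dvd_pow _ hgt).trans (Polynomial.pow_rootMultiplicity_dvd _ _)
    exact Polynomial.not_isUnit_X_sub_C η (hsep.squarefree _ hdvd)
  omega

lemma rm_expand (r : ℕ) (hr : 2 ≤ r) {P : Polynomial ℂ} (hP : P ≠ 0) {η : ℂ} (hη : η ≠ 0) :
    Polynomial.rootMultiplicity η (Polynomial.expand ℂ r P) =
      Polynomial.rootMultiplicity (η ^ r) P := by
  have hrpos : 0 < r := by omega
  obtain ⟨g, hg, ndvd⟩ := P.exists_eq_pow_rootMultiplicity_mul_and_not_dvd hP (η ^ r)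
  have hgne : g ≠ 0 := by
    rintro rfl
    rw [mul_zero] at hg
    exact hP hg
  have hgeval : g.eval (η ^ r) ≠ 0 := fun h => ndvd (Polynomial.dvd_iff_isRoot.mpr h)
  have hxne : ((Polynomial.X : Polynomial ℂ) ^ r - Polynomial.C (η ^ r)) ≠ 0 :=
    Polynomial.X_pow_sub_C_ne_zero hrpos _
  have hexne : Polynomial.expand ℂ r g ≠ 0 := by
    rw [Ne, Polynomial.expand_eq_zero hrpos]
    exact hgne
  have hnotroot : ¬ (Polynomial.expand ℂ r g).IsRoot η := by
    simpa [Polynomial.IsRoot, Polynomial.expand_eval] using hgeval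
  conv_lhs => rw [hg]
  rw [map_mul, map_pow, map_sub, Polynomial.expand_X, Polynomial.expand_C,
    Polynomial.rootMultiplicity_mul (mul_ne_zero (pow_ne_zero _ hxne) hexne),
    rm_pow, rm_X_pow_sub r hr hη, mul_one,
    Polynomial.rootMultiplicity_eq_zero hnotroot, add_zero]

lemma rm3 {p q s : Polynomial ℂ} (hp : p ≠ 0) (hq : q ≠ 0) (hs : s ≠ 0) (ζ : ℂ) :
    Polynomial.rootMultiplicity ζ (p * q * s) =
      Polynomial.rootMultiplicity ζ p + Polynomial.rootMultiplicity ζ q +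
        Polynomial.rootMultiplicity ζ s := by
  rw [Polynomial.rootMultiplicity_mul (mul_ne_zero (mul_ne_zero hp hq) hs),
    Polynomial.rootMultiplicity_mul (mul_ne_zero hp hq)]

lemma rm_C_mul {c : ℂ} (hc : c ≠ 0) {x : Polynomial ℂ} (hx : x ≠ 0) (ζ : ℂ) :
    Polynomial.rootMultiplicity ζ (Polynomial.C c * x) = Polynomial.rootMultiplicity ζ x := by
  rw [Polynomial.rootMultiplicity_mul (mul_ne_zero (Polynomial.C_ne_zero.mpr hc) hx),
    Polynomial.rootMultiplicity_C, zero_add]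

section Facts

variable {r : ℕ} {a : ℂ} {P Q Nn D : Polynomial ℂ}

lemma fact3 (hr : 2 ≤ r) (ha : a ≠ 0) (hP : P ≠ 0) (hQ : Q ≠ 0) (hN : Nn ≠ 0) (hD : D ≠ 0)
    (hPoly : Polynomial.expand ℂ r Q * D * P
      = Polynomial.expand ℂ r Q * Q * Nn + Polynomial.C a * (D * Q * Polynomial.expand ℂ r P))
    {ζ : ℂ} (hζ : ζ ≠ 0)
    (h1 : Polynomial.rootMultiplicity ζ D ≤ Polynomial.rootMultiplicity ζ Nn)
    (h2 : Polynomial.rootMultiplicity (ζ ^ r) Q ≤ Polynomial.rootMultiplicity (ζ ^ r) P) :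
    Polynomial.rootMultiplicity ζ Q ≤ Polynomial.rootMultiplicity ζ P := by
  have hrpos : 0 < r := by omega
  have hEQ : Polynomial.expand ℂ r Q ≠ 0 := by
    rw [Ne, Polynomial.expand_eq_zero hrpos]; exact hQ
  have hEP : Polynomial.expand ℂ r P ≠ 0 := by
    rw [Ne, Polynomial.expand_eq_zero hrpos]; exact hP
  have e1 : Polynomial.rootMultiplicity ζ (Polynomial.expand ℂ r Q)
      = Polynomial.rootMultiplicity (ζ ^ r) Q := rm_expand r hr hQ hζ
  have e2 : Polynomial.rootMultiplicity ζ (Polynomial.expand ℂ r P)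
      = Polynomial.rootMultiplicity (ζ ^ r) P := rm_expand r hr hP hζ
  have hLne : Polynomial.expand ℂ r Q * D * P ≠ 0 := mul_ne_zero (mul_ne_zero hEQ hD) hP
  have key := Polynomial.rootMultiplicity_add (p := Polynomial.expand ℂ r Q * Q * Nn)
    (q := Polynomial.C a * (D * Q * Polynomial.expand ℂ r P)) ζ (by rw [← hPoly]; exact hLne)
  rw [← hPoly, rm3 hEQ hD hP, rm3 hEQ hQ hN,
    rm_C_mul ha (mul_ne_zero (mul_ne_zero hD hQ) hEP), rm3 hD hQ hEP, e1, e2] at key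
  omega

lemma fact1 (hr : 2 ≤ r) (ha : a ≠ 0) (hP : P ≠ 0) (hQ : Q ≠ 0) (hN : Nn ≠ 0) (hD : D ≠ 0)
    (hPoly : Polynomial.expand ℂ r Q * D * P
      = Polynomial.expand ℂ r Q * Q * Nn + Polynomial.C a * (D * Q * Polynomial.expand ℂ r P))
    {ζ : ℂ} (hζ : ζ ≠ 0)
    (h1 : Polynomial.rootMultiplicity ζ Q ≤ Polynomial.rootMultiplicity ζ P)
    (h2 : Polynomial.rootMultiplicity (ζ ^ r) Q ≤ Polynomial.rootMultiplicity (ζ ^ r) P) :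
    Polynomial.rootMultiplicity ζ D ≤ Polynomial.rootMultiplicity ζ Nn := by
  have hrpos : 0 < r := by omega
  have hEQ : Polynomial.expand ℂ r Q ≠ 0 := by
    rw [Ne, Polynomial.expand_eq_zero hrpos]; exact hQ
  have hEP : Polynomial.expand ℂ r P ≠ 0 := by
    rw [Ne, Polynomial.expand_eq_zero hrpos]; exact hP
  have e1 : Polynomial.rootMultiplicity ζ (Polynomial.expand ℂ r Q)
      = Polynomial.rootMultiplicity (ζ ^ r) Q := rm_expand r hr hQ hζ
  have e2 : Polynomial.rootMultiplicity ζ (Polynomial.expand ℂ r P)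
      = Polynomial.rootMultiplicity (ζ ^ r) P := rm_expand r hr hP hζ
  have hid : Polynomial.expand ℂ r Q * Q * Nn
      = Polynomial.expand ℂ r Q * D * P + Polynomial.C (-a) * (D * Q * Polynomial.expand ℂ r P) := by
    rw [map_neg]
    linear_combination -hPoly
  have hLne : Polynomial.expand ℂ r Q * Q * Nn ≠ 0 := mul_ne_zero (mul_ne_zero hEQ hQ) hN
  have key := Polynomial.rootMultiplicity_add (p := Polynomial.expand ℂ r Q * D * P)
    (q := Polynomial.C (-a) * (D * Q * Polynomial.expand ℂ r P)) ζ (by rw [← hid]; exact hLne)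
  rw [← hid, rm3 hEQ hQ hN, rm3 hEQ hD hP,
    rm_C_mul (neg_ne_zero.mpr ha) (mul_ne_zero (mul_ne_zero hD hQ) hEP), rm3 hD hQ hEP,
    e1, e2] at key
  omega

lemma fact2 (hr : 2 ≤ r) (ha : a ≠ 0) (hP : P ≠ 0) (hQ : Q ≠ 0) (hN : Nn ≠ 0) (hD : D ≠ 0)
    (hPoly : Polynomial.expand ℂ r Q * D * P
      = Polynomial.expand ℂ r Q * Q * Nn + Polynomial.C a * (D * Q * Polynomial.expand ℂ r P))
    {ζ : ℂ} (hζ : ζ ≠ 0)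
    (h1 : Polynomial.rootMultiplicity ζ Q ≤ Polynomial.rootMultiplicity ζ P)
    (h2 : Polynomial.rootMultiplicity ζ D ≤ Polynomial.rootMultiplicity ζ Nn) :
    Polynomial.rootMultiplicity (ζ ^ r) Q ≤ Polynomial.rootMultiplicity (ζ ^ r) P := by
  have hrpos : 0 < r := by omega
  have hEQ : Polynomial.expand ℂ r Q ≠ 0 := by
    rw [Ne, Polynomial.expand_eq_zero hrpos]; exact hQ
  have hEP : Polynomial.expand ℂ r P ≠ 0 := by
    rw [Ne, Polynomial.expand_eq_zero hrpos]; exact hP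
  have e1 : Polynomial.rootMultiplicity ζ (Polynomial.expand ℂ r Q)
      = Polynomial.rootMultiplicity (ζ ^ r) Q := rm_expand r hr hQ hζ
  have e2 : Polynomial.rootMultiplicity ζ (Polynomial.expand ℂ r P)
      = Polynomial.rootMultiplicity (ζ ^ r) P := rm_expand r hr hP hζ
  have hid : Polynomial.C a * (D * Q * Polynomial.expand ℂ r P)
      = Polynomial.expand ℂ r Q * D * P
        + Polynomial.C (-1 : ℂ) * (Polynomial.expand ℂ r Q * Q * Nn) := by
    rw [map_neg, map_one]
    linear_combination -hPoly
  have hLne : Polynomial.C a * (D * Q * Polynomial.expand ℂ r P) ≠ 0 :=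
    mul_ne_zero (Polynomial.C_ne_zero.mpr ha) (mul_ne_zero (mul_ne_zero hD hQ) hEP)
  have key := Polynomial.rootMultiplicity_add (p := Polynomial.expand ℂ r Q * D * P)
    (q := Polynomial.C (-1 : ℂ) * (Polynomial.expand ℂ r Q * Q * Nn)) ζ (by rw [← hid]; exact hLne)
  rw [← hid, rm_C_mul ha (mul_ne_zero (mul_ne_zero hD hQ) hEP), rm3 hD hQ hEP,
    rm3 hEQ hD hP,
    rm_C_mul (neg_ne_zero.mpr one_ne_zero) (mul_ne_zero (mul_ne_zero hEQ hQ) hN),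
    rm3 hEQ hQ hN, e1, e2] at key
  omega

end Facts

section FuncEq

variable (r : ℕ) (a : ℂ)

lemma coeff_term_eq_zero (hr : 2 ≤ r) (AA BB : Polynomial ℂ) (hA0 : AA.coeff 0 = 0)
    (n h : ℕ) (hlt : n < r ^ h) :
    PowerSeries.coeff n
      (PowerSeries.C (a ^ h) * ((AA.comp (Polynomial.X ^ r ^ h) : Polynomial ℂ) : PowerSeries ℂ) *
        (((BB.comp (Polynomial.X ^ r ^ h) : Polynomial ℂ) : PowerSeries ℂ))⁻¹) = 0 := by
  rw [PowerSeries.coeff_mul]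
  apply Finset.sum_eq_zero
  intro p hp
  have hp1 : p.1 ≤ n := Finset.HasAntidiagonal.antidiagonal.fst_le hp
  have hz : PowerSeries.coeff p.1
      (PowerSeries.C (a ^ h) * ((AA.comp (Polynomial.X ^ r ^ h) : Polynomial ℂ) : PowerSeries ℂ)) = 0 := by
    rw [PowerSeries.coeff_C_mul, Polynomial.coeff_coe, ← Polynomial.expand_eq_comp_X_pow,
      Polynomial.coeff_expand (Nat.pow_pos (by omega) : 0 < r ^ h)]
    split_ifs with hdvd
    · have h0 : p.1 = 0 := Nat.eq_zero_of_dvd_of_lt hdvd (lt_of_le_of_lt hp1 hlt)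
      rw [h0, Nat.zero_div, hA0, mul_zero]
    · rw [mul_zero]
  rw [hz, zero_mul]

lemma constPS_comp (hr : 2 ≤ r) (h : ℕ) (BB : Polynomial ℂ) (hB : BB.eval 0 ≠ 0) :
    PowerSeries.constantCoeff ((BB.comp (Polynomial.X ^ r ^ h) : Polynomial ℂ) : PowerSeries ℂ) ≠ 0 := by
  rw [← PowerSeries.coeff_zero_eq_constantCoeff_apply, Polynomial.coeff_coe,
    Polynomial.coeff_zero_eq_eval_zero, Polynomial.eval_comp, Polynomial.eval_pow,
    Polynomial.eval_X, zero_pow (by positivity : r ^ h ≠ 0)]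
  exact hB

lemma funcEq (hr : 2 ≤ r) (hr0 : 0 < r) (AA BB : Polynomial ℂ) (hA0 : AA.coeff 0 = 0) (hB : BB.eval 0 ≠ 0) :
    seriesSum (fun h => PowerSeries.C (a ^ h) *
        ((AA.comp (Polynomial.X ^ r ^ h) : Polynomial ℂ) : PowerSeries ℂ) *
        (((BB.comp (Polynomial.X ^ r ^ h) : Polynomial ℂ) : PowerSeries ℂ))⁻¹)
      = ((AA : Polynomial ℂ) : PowerSeries ℂ) * (((BB : Polynomial ℂ) : PowerSeries ℂ))⁻¹ +
        PowerSeries.C a * expandPS r hr0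
          (seriesSum (fun h => PowerSeries.C (a ^ h) *
            ((AA.comp (Polynomial.X ^ r ^ h) : Polynomial ℂ) : PowerSeries ℂ) *
            (((BB.comp (Polynomial.X ^ r ^ h) : Polynomial ℂ) : PowerSeries ℂ))⁻¹)) := by
  set t : ℕ → PowerSeries ℂ := fun h => PowerSeries.C (a ^ h) *
      ((AA.comp (Polynomial.X ^ r ^ h) : Polynomial ℂ) : PowerSeries ℂ) *
      (((BB.comp (Polynomial.X ^ r ^ h) : Polynomial ℂ) : PowerSeries ℂ))⁻¹ with ht
  have hsmall : ∀ n h, n < h → PowerSeries.coeff n (t h) = 0 := by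
    intro n h hnh
    apply coeff_term_eq_zero r a hr AA BB hA0
    calc n < h := hnh
      _ < 2 ^ h := Nat.lt_two_pow_self
      _ ≤ r ^ h := Nat.pow_le_pow_left hr h
  have h10 : t 0 = ((AA : Polynomial ℂ) : PowerSeries ℂ) * (((BB : Polynomial ℂ) : PowerSeries ℂ))⁻¹ := by
    rw [ht]
    simp [pow_zero, pow_one, Polynomial.comp_X]
  have hstep : ∀ h, t (h + 1) = PowerSeries.C a * expandPS r hr0 (t h) := by
    intro h
    have hA' : Polynomial.expand ℂ r (AA.comp (Polynomial.X ^ r ^ h))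
        = AA.comp (Polynomial.X ^ r ^ (h + 1)) := by
      rw [Polynomial.expand_eq_comp_X_pow, Polynomial.comp_assoc, Polynomial.X_pow_comp,
        ← pow_mul, ← pow_succ']
    have hB' : Polynomial.expand ℂ r (BB.comp (Polynomial.X ^ r ^ h))
        = BB.comp (Polynomial.X ^ r ^ (h + 1)) := by
      rw [Polynomial.expand_eq_comp_X_pow, Polynomial.comp_assoc, Polynomial.X_pow_comp,
        ← pow_mul, ← pow_succ']
    rw [ht]
    simp only
    rw [map_mul, map_mul, expandPS_C, expandPS_coe,
      expandPS_inv r hr0 _ (constPS_comp r hr h BB hB), expandPS_coe, hA', hB',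
      pow_succ' a h, map_mul]
    ring
  calc seriesSum t = t 0 + seriesSum (fun h => t (h + 1)) := seriesSum_shift t hsmall
    _ = ((AA : Polynomial ℂ) : PowerSeries ℂ) * (((BB : Polynomial ℂ) : PowerSeries ℂ))⁻¹ +
        seriesSum (fun h => PowerSeries.C a * expandPS r hr0 (t h)) := by
      rw [h10]
      congr 1
      simp only [hstep]
    _ = ((AA : Polynomial ℂ) : PowerSeries ℂ) * (((BB : Polynomial ℂ) : PowerSeries ℂ))⁻¹ +
        PowerSeries.C a * expandPS r hr0 (seriesSum t) := by
      rw [seriesSum_C_mul, expandPS_seriesSum]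

end FuncEq

lemma main_forward
    (r : ℕ) (hr : 2 ≤ r) (a : ℂ) (ha : a ≠ 0) (m : ℕ) (hm : 1 ≤ m)
    (A B : ℕ → Polynomial ℂ) (t : ℕ → ℕ) (ω : ℕ → ℝ)
    (hB_ne : ∀ i ≤ m, B i ≠ 0)
    (hA0 : ∀ i ≤ m, (A i).coeff 0 = 0)
    (hB0 : B 0 = 1)
    (hcop : ∀ i, 1 ≤ i → i ≤ m → IsCoprime (A i) (B i))
    (hnconst : ∀ i, 1 ≤ i → i ≤ m → 0 < (B i).natDegree)
    (ht : ∀ i, 1 ≤ i → i ≤ m → ((B i).roots.toFinset.card = t i))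
    (hω : ∀ i, 1 ≤ i → i ≤ m → ∀ z ∈ (B i).roots, ‖z‖ = ω i)
    (hωdist : ∀ i j, 1 ≤ i → i ≤ m → 1 ≤ j → j ≤ m → i ≠ j → ω i ≠ ω j)
    (hωm : ω m = 1)
    (hrt : ∀ i j, 1 ≤ i → i < m → 1 ≤ j → j < m → t j ≤ (r - 1) * t i)
    (u : ℕ → ℂ)
    (hL : IsRationalPS
      (∑ i ∈ Finset.range (m + 1),
        PowerSeries.C (u i) *
          seriesSum (fun h =>
            PowerSeries.C (a ^ h) * ((A i).comp (Polynomial.X ^ r ^ h) : PowerSeries ℂ) *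
              (((B i).comp (Polynomial.X ^ r ^ h) : PowerSeries ℂ))⁻¹))) :
    ∀ i, 1 ≤ i → i < m → u i = 0 := by
  classical
  have hr0 : 0 < r := by omega
  by_contra hcon
  push_neg at hcon
  obtain ⟨i₁, hi₁a, hi₁b, hu₁⟩ := hcon
  -- basic consequences of the hypotheses
  have hBeval : ∀ i, i ≤ m → (B i).eval 0 ≠ 0 := by
    intro i him
    rcases Nat.eq_zero_or_pos i with rfl | hpos
    · rw [hB0]; simp
    · obtain ⟨x, y, hxy⟩ := hcop i hpos him
      intro h0
      have hA00 : (A i).eval 0 = 0 := by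
        rw [← Polynomial.coeff_zero_eq_eval_zero]; exact hA0 i him
      have hev := congrArg (Polynomial.eval 0) hxy
      simp [Polynomial.eval_add, Polynomial.eval_mul, hA00, h0] at hev
  have hrootne : ∀ i, 1 ≤ i → i ≤ m → ∀ ζ : ℂ, (B i).IsRoot ζ → ζ ≠ 0 := by
    intro i h1 h2 ζ hζ h0
    rw [h0] at hζ
    exact hBeval i h2 hζ
  have hAroot : ∀ i, 1 ≤ i → i ≤ m → ∀ ζ : ℂ, (B i).IsRoot ζ → (A i).eval ζ ≠ 0 := by
    intro i h1 h2 ζ hζ hA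
    obtain ⟨x, y, hxy⟩ := hcop i h1 h2
    have hev := congrArg (Polynomial.eval ζ) hxy
    simp only [Polynomial.eval_add, Polynomial.eval_mul, Polynomial.eval_one] at hev
    rw [hA, show Polynomial.eval ζ (B i) = 0 from hζ] at hev
    simp at hev
  have habs : ∀ i, 1 ≤ i → i ≤ m → ∀ ζ : ℂ, (B i).IsRoot ζ → ‖ζ‖ = ω i := by
    intro i h1 h2 ζ hζ
    exact hω i h1 h2 ζ (Polynomial.mem_roots'.mpr ⟨hB_ne i h2, hζ⟩)
  have hroot_exists : ∀ i, 1 ≤ i → i ≤ m → ∃ z : ℂ, (B i).IsRoot z := by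
    intro i h1 h2
    apply IsAlgClosed.exists_root
    have := Polynomial.natDegree_pos_iff_degree_pos.mp (hnconst i h1 h2)
    exact this.ne'
  have hωpos : ∀ i, 1 ≤ i → i ≤ m → 0 < ω i := by
    intro i h1 h2
    obtain ⟨z, hz⟩ := hroot_exists i h1 h2
    rw [← habs i h1 h2 z hz]
    exact norm_pos_iff.mpr (hrootne i h1 h2 z hz)
  have ht1 : ∀ i, 1 ≤ i → i ≤ m → 1 ≤ t i := by
    intro i h1 h2
    obtain ⟨z, hz⟩ := hroot_exists i h1 h2
    rw [← ht i h1 h2]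
    exact Finset.card_pos.mpr ⟨z, Multiset.mem_toFinset.mpr (Polynomial.mem_roots'.mpr ⟨hB_ne i h2, hz⟩)⟩
  -- real-power helpers
  have hlogne : ∀ x : ℝ, 0 < x → x ≠ 1 → Real.log x ≠ 0 := by
    intro x hx hx1 h0
    rcases Real.log_eq_zero.mp h0 with h | h | h
    · exact absurd h (ne_of_gt hx)
    · exact hx1 h
    · nlinarith
  have hpowinj : ∀ x : ℝ, 0 < x → x ≠ 1 → ∀ k k' : ℕ, x ^ k = x ^ k' → k = k' := by
    intro x hx hx1 k k' hkk
    have hll := congrArg Real.log hkk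
    rw [Real.log_pow, Real.log_pow] at hll
    have : (k : ℝ) = k' := mul_right_cancel₀ (hlogne x hx hx1) hll
    exact_mod_cast this
  have hpow1 : ∀ x : ℝ, 0 < x → ∀ n : ℕ, n ≠ 0 → x ^ n = 1 → x = 1 := by
    intro x hx n hn hxn
    by_contra hx1
    have := hpowinj x hx hx1 n 0 (by rw [hxn, pow_zero])
    exact hn this
  have hpowxy : ∀ x y : ℝ, 0 < x → 0 < y → ∀ n : ℕ, n ≠ 0 → x ^ n = y ^ n → x = y := by
    intro x y hx hy n hn hxy
    have hlx := congrArg Real.log hxy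
    rw [Real.log_pow, Real.log_pow] at hlx
    have hlog : Real.log x = Real.log y := by
      have hn' : (n : ℝ) ≠ 0 := Nat.cast_ne_zero.mpr hn
      field_simp at hlx
      tauto
    exact Real.log_injOn_pos (Set.mem_Ioi.mpr hx) (Set.mem_Ioi.mpr hy) hlog
  -- choice of i₀
  set U' : Finset ℕ := (Finset.Ico 1 m).filter (fun i => u i ≠ 0) with hU'def
  have hU'ne : U'.Nonempty := by
    refine ⟨i₁, ?_⟩
    rw [hU'def, Finset.mem_filter, Finset.mem_Ico]
    exact ⟨⟨hi₁a, hi₁b⟩, hu₁⟩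
  obtain ⟨i₀, hi₀U, hi₀max⟩ := Finset.exists_max_image U' (fun i => |Real.log (ω i)|) hU'ne
  have hi₀mem := Finset.mem_filter.mp (hU'def ▸ hi₀U)
  have hi₀1 : 1 ≤ i₀ := (Finset.mem_Ico.mp hi₀mem.1).1
  have hi₀m : i₀ < m := (Finset.mem_Ico.mp hi₀mem.1).2
  have hu₀ : u i₀ ≠ 0 := hi₀mem.2
  have hi₀le : i₀ ≤ m := le_of_lt hi₀m
  have hωpos₀ : 0 < ω i₀ := hωpos i₀ hi₀1 hi₀le
  have hω1 : ω i₀ ≠ 1 := by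
    intro h
    exact hωdist i₀ m hi₀1 hi₀le hm le_rfl (Nat.ne_of_lt hi₀m) (h.trans hωm.symm)
  have hlog0 : Real.log (ω i₀) ≠ 0 := hlogne _ hωpos₀ hω1
  -- the rational-function setup
  set FF : PowerSeries ℂ := ∑ i ∈ Finset.range (m + 1),
      PowerSeries.C (u i) *
        seriesSum (fun h =>
          PowerSeries.C (a ^ h) * ((A i).comp (Polynomial.X ^ r ^ h) : PowerSeries ℂ) *
            (((B i).comp (Polynomial.X ^ r ^ h) : PowerSeries ℂ))⁻¹) with hFFdef
  obtain ⟨P, Q, hQ, hPQ⟩ := hL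
  set D : Polynomial ℂ := ∏ l ∈ Finset.range (m + 1), B l with hDdef
  set Nn : Polynomial ℂ := ∑ i ∈ Finset.range (m + 1),
      Polynomial.C (u i) * (A i * ∏ l ∈ (Finset.range (m + 1)).erase i, B l) with hNndef
  have hDconst : PowerSeries.constantCoeff ((D : Polynomial ℂ) : PowerSeries ℂ) ≠ 0 := by
    rw [← PowerSeries.coeff_zero_eq_constantCoeff_apply, Polynomial.coeff_coe,
      Polynomial.coeff_zero_eq_eval_zero, hDdef, Polynomial.eval_prod]
    rw [Finset.prod_ne_zero_iff]
    intro l hl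
    exact hBeval l (by simpa [Nat.lt_succ_iff] using hl)
  have hDinv : ((D : Polynomial ℂ) : PowerSeries ℂ) * (((D : Polynomial ℂ) : PowerSeries ℂ))⁻¹ = 1 :=
    PowerSeries.mul_inv_cancel _ hDconst
  -- functional equation for FF
  have hfe : FF = ((Nn : Polynomial ℂ) : PowerSeries ℂ) * (((D : Polynomial ℂ) : PowerSeries ℂ))⁻¹
      + PowerSeries.C a * expandPS r hr0 FF := by
    have step1 : FF = (∑ i ∈ Finset.range (m + 1),
        PowerSeries.C (u i) * (((A i : Polynomial ℂ) : PowerSeries ℂ) * (((B i : Polynomial ℂ) : PowerSeries ℂ))⁻¹))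
        + PowerSeries.C a * expandPS r hr0 FF := by
      conv_lhs => rw [hFFdef]
      have hterm : ∀ i ∈ Finset.range (m + 1),
          PowerSeries.C (u i) *
            seriesSum (fun h =>
              PowerSeries.C (a ^ h) * ((A i).comp (Polynomial.X ^ r ^ h) : PowerSeries ℂ) *
                (((B i).comp (Polynomial.X ^ r ^ h) : PowerSeries ℂ))⁻¹)
          = PowerSeries.C (u i) * (((A i : Polynomial ℂ) : PowerSeries ℂ) * (((B i : Polynomial ℂ) : PowerSeries ℂ))⁻¹)
            + PowerSeries.C (u i) * (PowerSeries.C a * expandPS r hr0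
              (seriesSum (fun h =>
                PowerSeries.C (a ^ h) * ((A i).comp (Polynomial.X ^ r ^ h) : PowerSeries ℂ) *
                  (((B i).comp (Polynomial.X ^ r ^ h) : PowerSeries ℂ))⁻¹))) := by
        intro i hi
        have him : i ≤ m := by simpa [Nat.lt_succ_iff] using hi
        conv_lhs => rw [funcEq r a hr hr0 (A i) (B i) (hA0 i him) (hBeval i him)]
        rw [mul_add]
      rw [Finset.sum_congr rfl hterm, Finset.sum_add_distrib]
      congr 1
      have h2 : ∀ i ∈ Finset.range (m+1), PowerSeries.C (u i) * (PowerSeries.C a * expandPS r hr0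
            (seriesSum (fun h =>
              PowerSeries.C (a ^ h) * ((A i).comp (Polynomial.X ^ r ^ h) : PowerSeries ℂ) *
                (((B i).comp (Polynomial.X ^ r ^ h) : PowerSeries ℂ))⁻¹)))
          = PowerSeries.C a * expandPS r hr0 (PowerSeries.C (u i) *
            seriesSum (fun h =>
              PowerSeries.C (a ^ h) * ((A i).comp (Polynomial.X ^ r ^ h) : PowerSeries ℂ) *
                (((B i).comp (Polynomial.X ^ r ^ h) : PowerSeries ℂ))⁻¹)) := by
        intro i hi
        rw [map_mul, expandPS_C]
        ring
      rw [Finset.sum_congr rfl h2, ← Finset.mul_sum, ← map_sum, ← hFFdef]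
    have hND : (∑ i ∈ Finset.range (m + 1),
        PowerSeries.C (u i) * (((A i : Polynomial ℂ) : PowerSeries ℂ) * (((B i : Polynomial ℂ) : PowerSeries ℂ))⁻¹))
        = ((Nn : Polynomial ℂ) : PowerSeries ℂ) * (((D : Polynomial ℂ) : PowerSeries ℂ))⁻¹ := by
      have hmul : (∑ i ∈ Finset.range (m + 1),
          PowerSeries.C (u i) * (((A i : Polynomial ℂ) : PowerSeries ℂ) * (((B i : Polynomial ℂ) : PowerSeries ℂ))⁻¹))
          * ((D : Polynomial ℂ) : PowerSeries ℂ) = ((Nn : Polynomial ℂ) : PowerSeries ℂ) := by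
        rw [Finset.sum_mul]
        have hterm2 : ∀ i ∈ Finset.range (m + 1),
            (PowerSeries.C (u i) * (((A i : Polynomial ℂ) : PowerSeries ℂ) * (((B i : Polynomial ℂ) : PowerSeries ℂ))⁻¹))
              * ((D : Polynomial ℂ) : PowerSeries ℂ)
            = ((Polynomial.C (u i) * (A i * ∏ l ∈ (Finset.range (m + 1)).erase i, B l) : Polynomial ℂ) : PowerSeries ℂ) := by
          intro i hi
          have him : i ≤ m := by simpa [Nat.lt_succ_iff] using hi
          have hsplit : ((D : Polynomial ℂ) : PowerSeries ℂ)
              = ((B i : Polynomial ℂ) : PowerSeries ℂ) * ((∏ l ∈ (Finset.range (m + 1)).erase i, B l : Polynomial ℂ) : PowerSeries ℂ) := by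
            rw [← Polynomial.coe_mul, Finset.mul_prod_erase _ _ hi, hDdef]
          have hBiconst : PowerSeries.constantCoeff ((B i : Polynomial ℂ) : PowerSeries ℂ) ≠ 0 := by
            rw [← PowerSeries.coeff_zero_eq_constantCoeff_apply, Polynomial.coeff_coe,
              Polynomial.coeff_zero_eq_eval_zero]
            exact hBeval i him
          rw [hsplit]
          calc (PowerSeries.C (u i) * (((A i : Polynomial ℂ) : PowerSeries ℂ) * (((B i : Polynomial ℂ) : PowerSeries ℂ))⁻¹))
              * (((B i : Polynomial ℂ) : PowerSeries ℂ) * ((∏ l ∈ (Finset.range (m + 1)).erase i, B l : Polynomial ℂ) : PowerSeries ℂ))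
              = PowerSeries.C (u i) * ((A i : Polynomial ℂ) : PowerSeries ℂ)
                * ((∏ l ∈ (Finset.range (m + 1)).erase i, B l : Polynomial ℂ) : PowerSeries ℂ)
                * ((((B i : Polynomial ℂ) : PowerSeries ℂ))⁻¹ * ((B i : Polynomial ℂ) : PowerSeries ℂ)) := by ring
            _ = PowerSeries.C (u i) * ((A i : Polynomial ℂ) : PowerSeries ℂ)
                * ((∏ l ∈ (Finset.range (m + 1)).erase i, B l : Polynomial ℂ) : PowerSeries ℂ) := by
                rw [PowerSeries.inv_mul_cancel _ hBiconst, mul_one]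
            _ = ((Polynomial.C (u i) * (A i * ∏ l ∈ (Finset.range (m + 1)).erase i, B l) : Polynomial ℂ) : PowerSeries ℂ) := by
                simp only [Polynomial.coe_mul, Polynomial.coe_C]
                ring
        rw [Finset.sum_congr rfl hterm2]
        simp only [← Polynomial.coeToPowerSeries.ringHom_apply, ← map_sum]
        rfl
      calc (∑ i ∈ Finset.range (m + 1),
          PowerSeries.C (u i) * (((A i : Polynomial ℂ) : PowerSeries ℂ) * (((B i : Polynomial ℂ) : PowerSeries ℂ))⁻¹))
          = (∑ i ∈ Finset.range (m + 1),
          PowerSeries.C (u i) * (((A i : Polynomial ℂ) : PowerSeries ℂ) * (((B i : Polynomial ℂ) : PowerSeries ℂ))⁻¹))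
            * (((D : Polynomial ℂ) : PowerSeries ℂ) * (((D : Polynomial ℂ) : PowerSeries ℂ))⁻¹) := by
              rw [hDinv, mul_one]
        _ = ((∑ i ∈ Finset.range (m + 1),
          PowerSeries.C (u i) * (((A i : Polynomial ℂ) : PowerSeries ℂ) * (((B i : Polynomial ℂ) : PowerSeries ℂ))⁻¹))
            * ((D : Polynomial ℂ) : PowerSeries ℂ)) * (((D : Polynomial ℂ) : PowerSeries ℂ))⁻¹ := by ring
        _ = ((Nn : Polynomial ℂ) : PowerSeries ℂ) * (((D : Polynomial ℂ) : PowerSeries ℂ))⁻¹ := by rw [hmul]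
    conv_lhs => rw [step1]
    rw [hND]
  -- the polynomial identity
  have hEQid : ((Polynomial.expand ℂ r Q : Polynomial ℂ) : PowerSeries ℂ) * expandPS r hr0 FF
      = ((Polynomial.expand ℂ r P : Polynomial ℂ) : PowerSeries ℂ) := by
    have := congrArg (expandPS r hr0) hPQ
    rwa [map_mul, expandPS_coe, expandPS_coe] at this
  have key : ((Polynomial.expand ℂ r Q : Polynomial ℂ) : PowerSeries ℂ) * ((D : Polynomial ℂ) : PowerSeries ℂ) * ((P : Polynomial ℂ) : PowerSeries ℂ)
      = ((Polynomial.expand ℂ r Q : Polynomial ℂ) : PowerSeries ℂ) * ((Q : Polynomial ℂ) : PowerSeries ℂ) * ((Nn : Polynomial ℂ) : PowerSeries ℂ)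
        + PowerSeries.C a * (((D : Polynomial ℂ) : PowerSeries ℂ) * ((Q : Polynomial ℂ) : PowerSeries ℂ) * ((Polynomial.expand ℂ r P : Polynomial ℂ) : PowerSeries ℂ)) := by
    calc ((Polynomial.expand ℂ r Q : Polynomial ℂ) : PowerSeries ℂ) * ((D : Polynomial ℂ) : PowerSeries ℂ) * ((P : Polynomial ℂ) : PowerSeries ℂ)
        = ((Polynomial.expand ℂ r Q : Polynomial ℂ) : PowerSeries ℂ) * ((D : Polynomial ℂ) : PowerSeries ℂ) * (((Q : Polynomial ℂ) : PowerSeries ℂ) * FF) := by rw [hPQ]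
      _ = ((Polynomial.expand ℂ r Q : Polynomial ℂ) : PowerSeries ℂ) * ((D : Polynomial ℂ) : PowerSeries ℂ) * ((Q : Polynomial ℂ) : PowerSeries ℂ) * FF := by ring
      _ = ((Polynomial.expand ℂ r Q : Polynomial ℂ) : PowerSeries ℂ) * ((D : Polynomial ℂ) : PowerSeries ℂ) * ((Q : Polynomial ℂ) : PowerSeries ℂ)
            * (((Nn : Polynomial ℂ) : PowerSeries ℂ) * (((D : Polynomial ℂ) : PowerSeries ℂ))⁻¹ + PowerSeries.C a * expandPS r hr0 FF) := by
          conv_lhs => rw [hfe]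
      _ = ((Polynomial.expand ℂ r Q : Polynomial ℂ) : PowerSeries ℂ) * ((Q : Polynomial ℂ) : PowerSeries ℂ) * ((Nn : Polynomial ℂ) : PowerSeries ℂ)
            * (((D : Polynomial ℂ) : PowerSeries ℂ) * (((D : Polynomial ℂ) : PowerSeries ℂ))⁻¹)
          + PowerSeries.C a * (((D : Polynomial ℂ) : PowerSeries ℂ) * ((Q : Polynomial ℂ) : PowerSeries ℂ)
            * (((Polynomial.expand ℂ r Q : Polynomial ℂ) : PowerSeries ℂ) * expandPS r hr0 FF)) := by ring
      _ = _ := by rw [hDinv, mul_one, hEQid]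
  have hPoly : Polynomial.expand ℂ r Q * D * P
      = Polynomial.expand ℂ r Q * Q * Nn + Polynomial.C a * (D * Q * Polynomial.expand ℂ r P) := by
    apply Polynomial.coe_inj.mp
    simpa only [Polynomial.coe_mul, Polynomial.coe_add, Polynomial.coe_C] using key
  -- nonzeroness
  have hD0 : D ≠ 0 := by
    rw [hDdef]
    rw [Finset.prod_ne_zero_iff]
    intro l hl
    exact hB_ne l (by simpa [Nat.lt_succ_iff] using hl)
  have hNeval : ∀ ζ : ℂ, (B i₀).IsRoot ζ → Nn.eval ζ ≠ 0 := by
    intro ζ hroot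
    rw [hNndef, Polynomial.eval_finset_sum]
    rw [Finset.sum_eq_single_of_mem i₀ (Finset.mem_range.mpr (by omega))]
    · simp only [Polynomial.eval_mul, Polynomial.eval_C]
      apply mul_ne_zero hu₀
      apply mul_ne_zero (hAroot i₀ hi₀1 hi₀le ζ hroot)
      rw [Polynomial.eval_prod, Finset.prod_ne_zero_iff]
      intro l hl
      obtain ⟨hlne, hlmem⟩ := Finset.mem_erase.mp hl
      have hlm : l ≤ m := by simpa [Nat.lt_succ_iff] using hlmem
      rcases Nat.eq_zero_or_pos l with rfl | hlpos
      · rw [hB0]; simp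
      · intro h0
        exact hωdist l i₀ hlpos hlm hi₀1 hi₀le hlne
          ((habs l hlpos hlm ζ h0).symm.trans (habs i₀ hi₀1 hi₀le ζ hroot))
    · intro b hb hbne
      simp only [Polynomial.eval_mul, Polynomial.eval_C]
      have hmem : i₀ ∈ (Finset.range (m + 1)).erase b :=
        Finset.mem_erase.mpr ⟨fun h => hbne h.symm, Finset.mem_range.mpr (by omega)⟩
      rw [Polynomial.eval_prod,
        Finset.prod_eq_zero hmem (show Polynomial.eval ζ (B i₀) = 0 from hroot), mul_zero, mul_zero]
  have hN0 : Nn ≠ 0 := by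
    obtain ⟨z, hz⟩ := hroot_exists i₀ hi₀1 hi₀le
    intro h
    exact hNeval z hz (by rw [h, Polynomial.eval_zero])
  have hEQ0 : Polynomial.expand ℂ r Q ≠ 0 := by
    rw [Ne, Polynomial.expand_eq_zero hr0]; exact hQ
  have hP0 : P ≠ 0 := by
    intro h
    rw [h, map_zero] at hPoly
    simp only [mul_zero, add_zero, zero_add] at hPoly
    exact (mul_ne_zero (mul_ne_zero hEQ0 hQ) hN0) hPoly.symm
  -- Fact 0, forward direction
  have hfact0fwd : ∀ ζ : ℂ, Polynomial.rootMultiplicity ζ Nn < Polynomial.rootMultiplicity ζ D →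
      ∃ j, 1 ≤ j ∧ j ≤ m ∧ u j ≠ 0 ∧ (B j).IsRoot ζ := by
    intro ζ hlt
    have hDroot : D.IsRoot ζ := (Polynomial.rootMultiplicity_pos hD0).mp (by omega)
    have hex : ∃ l ∈ Finset.range (m + 1), Polynomial.eval ζ (B l) = 0 := by
      have h0 : Polynomial.eval ζ (∏ l ∈ Finset.range (m + 1), B l) = 0 := by
        rw [← hDdef]; exact hDroot
      rw [Polynomial.eval_prod] at h0
      exact Finset.prod_eq_zero_iff.mp h0
    obtain ⟨l, hlmem, hleval⟩ := hex
    have hlm : l ≤ m := by simpa [Nat.lt_succ_iff] using hlmem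
    have hl1 : 1 ≤ l := by
      rcases Nat.eq_zero_or_pos l with rfl | hpos
      · rw [hB0] at hleval; simp at hleval
      · exact hpos
    refine ⟨l, hl1, hlm, ?_, hleval⟩
    by_contra hul'
    have hul : u l = 0 := hul'
    set M : Polynomial ℂ := ∑ i ∈ (Finset.range (m + 1)).erase l,
        Polynomial.C (u i) * (A i * ∏ l' ∈ ((Finset.range (m + 1)).erase i).erase l, B l') with hMdef
    set D' : Polynomial ℂ := ∏ l' ∈ (Finset.range (m + 1)).erase l, B l' with hD'def
    have hDfac : D = B l * D' := by
      rw [hDdef, hD'def, Finset.mul_prod_erase _ _ hlmem]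
    have hNfac : Nn = B l * M := by
      rw [hNndef, ← Finset.add_sum_erase _ _ hlmem, hul, map_zero, zero_mul, zero_add,
        hMdef, Finset.mul_sum]
      apply Finset.sum_congr rfl
      intro i hi
      have hine : i ≠ l := (Finset.mem_erase.mp hi).1
      have hlmem' : l ∈ (Finset.range (m + 1)).erase i :=
        Finset.mem_erase.mpr ⟨fun hh => hine hh.symm, hlmem⟩
      rw [← Finset.mul_prod_erase _ _ hlmem']
      ring
    have hM0 : M ≠ 0 := fun hh => hN0 (by rw [hNfac, hh, mul_zero])
    have hD'0 : D' ≠ 0 := fun hh => hD0 (by rw [hDfac, hh, mul_zero])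
    have hD'eval : Polynomial.eval ζ D' ≠ 0 := by
      rw [hD'def, Polynomial.eval_prod, Finset.prod_ne_zero_iff]
      intro l' hl'
      obtain ⟨hl'ne, hl'mem⟩ := Finset.mem_erase.mp hl'
      have hl'm : l' ≤ m := by simpa [Nat.lt_succ_iff] using hl'mem
      rcases Nat.eq_zero_or_pos l' with rfl | hl'pos
      · rw [hB0]; simp
      · intro h0
        exact hωdist l' l hl'pos hl'm hl1 hlm hl'ne
          ((habs l' hl'pos hl'm ζ h0).symm.trans (habs l hl1 hlm ζ hleval))
    have hrmN : Polynomial.rootMultiplicity ζ Nn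
        = Polynomial.rootMultiplicity ζ (B l) + Polynomial.rootMultiplicity ζ M := by
      rw [hNfac, Polynomial.rootMultiplicity_mul (by rw [← hNfac]; exact hN0)]
    have hrmD : Polynomial.rootMultiplicity ζ D
        = Polynomial.rootMultiplicity ζ (B l) + Polynomial.rootMultiplicity ζ D' := by
      rw [hDfac, Polynomial.rootMultiplicity_mul (by rw [← hDfac]; exact hD0)]
    have hD'rm : Polynomial.rootMultiplicity ζ D' = 0 :=
      Polynomial.rootMultiplicity_eq_zero hD'eval
    omega
  -- Fact 0, converse direction for i₀
  have hfact0conv : ∀ ζ : ℂ, (B i₀).IsRoot ζ →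
      Polynomial.rootMultiplicity ζ Nn < Polynomial.rootMultiplicity ζ D := by
    intro ζ hroot
    have h1 : Polynomial.rootMultiplicity ζ Nn = 0 :=
      Polynomial.rootMultiplicity_eq_zero (hNeval ζ hroot)
    have h2 : D.IsRoot ζ := by
      show Polynomial.eval ζ D = 0
      rw [hDdef, Polynomial.eval_prod]
      exact Finset.prod_eq_zero (Finset.mem_range.mpr (by omega : i₀ < m + 1))
        (show Polynomial.eval ζ (B i₀) = 0 from hroot)
    have h3 := (Polynomial.rootMultiplicity_pos hD0).mpr h2
    omega
  -- the pole set
  set S : Finset ℂ := Q.roots.toFinset.filter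
      (fun ζ => Polynomial.rootMultiplicity ζ P < Polynomial.rootMultiplicity ζ Q) with hSdef
  have hmemS : ∀ ζ : ℂ, Polynomial.rootMultiplicity ζ P < Polynomial.rootMultiplicity ζ Q →
      ζ ∈ S := by
    intro ζ h
    rw [hSdef, Finset.mem_filter]
    exact ⟨Multiset.mem_toFinset.mpr (Polynomial.mem_roots'.mpr
      ⟨hQ, (Polynomial.rootMultiplicity_pos hQ).mp (by omega)⟩), h⟩
  have hSmem : ∀ ζ ∈ S, Polynomial.rootMultiplicity ζ P < Polynomial.rootMultiplicity ζ Q :=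
    fun ζ h => (Finset.mem_filter.mp h).2
  have F1 : ∀ ζ : ℂ, ζ ≠ 0 →
      Polynomial.rootMultiplicity ζ Nn < Polynomial.rootMultiplicity ζ D → ζ ∈ S ∨ ζ ^ r ∈ S := by
    intro ζ hζ h
    by_contra hno
    push_neg at hno
    exact absurd (fact1 hr ha hP0 hQ hN0 hD0 hPoly hζ
      (not_lt.mp (fun hh => hno.1 (hmemS ζ hh)))
      (not_lt.mp (fun hh => hno.2 (hmemS (ζ ^ r) hh)))) (by omega)
  have F2 : ∀ η : ℂ, η ≠ 0 → η ^ r ∈ S →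
      η ∈ S ∨ Polynomial.rootMultiplicity η Nn < Polynomial.rootMultiplicity η D := by
    intro η hη h
    by_contra hno
    push_neg at hno
    exact absurd (fact2 hr ha hP0 hQ hN0 hD0 hPoly hη
      (not_lt.mp (fun hh => hno.1 (hmemS η hh))) hno.2)
      (not_le.mpr (hSmem _ h))
  have F3 : ∀ ζ : ℂ, ζ ≠ 0 → ζ ∈ S →
      Polynomial.rootMultiplicity ζ Nn < Polynomial.rootMultiplicity ζ D ∨ ζ ^ r ∈ S := by
    intro ζ hζ h
    by_contra hno
    push_neg at hno
    exact absurd (fact3 hr ha hP0 hQ hN0 hD0 hPoly hζ hno.1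
      (not_lt.mp (fun hh => hno.2 (hmemS (ζ ^ r) hh)))) (not_le.mpr (hSmem ζ h))
  -- downward chain of moduli
  set Sd : ℕ → Finset ℂ := fun k => S.filter (fun ζ => ‖ζ‖ = ω i₀ ^ r ^ k) with hSddef
  have hSdne0 : ∀ k, ∀ ζ ∈ Sd k, ζ ≠ 0 := by
    intro k ζ hmem h0
    have h1 := (Finset.mem_filter.mp hmem).2
    rw [h0, norm_zero] at h1
    exact absurd h1.symm (ne_of_gt (pow_pos hωpos₀ _))
  have down_step : ∀ k, 1 ≤ k → (Sd k).Nonempty → (Sd (k + 1)).Nonempty := by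
    rintro k hk ⟨ζ, hζmem⟩
    have hζS : ζ ∈ S := (Finset.mem_filter.mp hζmem).1
    have hζabs : ‖ζ‖ = ω i₀ ^ r ^ k := (Finset.mem_filter.mp hζmem).2
    have hζ0 : ζ ≠ 0 := hSdne0 k ζ hζmem
    rcases F3 ζ hζ0 hζS with hrr | hS'
    · exfalso
      obtain ⟨j, hj1, hjm, huj, hjroot⟩ := hfact0fwd ζ hrr
      have hωj : ω j = ω i₀ ^ r ^ k := by rw [← habs j hj1 hjm ζ hjroot, hζabs]
      have hjne : j ≠ m := by
        intro hjm'
        apply hω1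
        apply hpow1 (ω i₀) hωpos₀ (r ^ k) (by positivity)
        rw [← hωj, hjm', hωm]
      have hjU : j ∈ U' := by
        rw [hU'def, Finset.mem_filter, Finset.mem_Ico]
        exact ⟨⟨hj1, lt_of_le_of_ne hjm hjne⟩, huj⟩
      have hle := hi₀max j hjU
      rw [hωj, Real.log_pow] at hle
      rw [abs_mul, Nat.abs_cast] at hle
      have hrk2 : (2 : ℝ) ≤ ((r ^ k : ℕ) : ℝ) := by
        have : 2 ≤ r ^ k := le_trans hr (Nat.le_self_pow (by omega) r)
        exact_mod_cast this
      have hlpos : 0 < |Real.log (ω i₀)| := abs_pos.mpr hlog0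
      nlinarith
    · have hmem2 : ζ ^ r ∈ Sd (k + 1) := by
        simp only [hSddef, Finset.mem_filter]
        exact ⟨hS', by rw [norm_pow, hζabs, ← pow_mul, ← pow_succ]⟩
      exact Finset.nonempty_iff_ne_empty.mpr (Finset.ne_empty_of_mem hmem2)
  have down_empty : ∀ k, 1 ≤ k → Sd k = ∅ := by
    intro k hk
    by_contra hne
    have hstep : ∀ j : ℕ, (Sd (k + j)).Nonempty := by
      intro j
      induction j with
      | zero => exact Finset.nonempty_iff_ne_empty.mpr hne
      | succ j ih => exact down_step (k + j) (by omega) ih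
    choose f hf using hstep
    have hfS : ∀ j, f j ∈ S := fun j => (Finset.mem_filter.mp (hf j)).1
    have hfabs : ∀ j, ‖f j‖ = ω i₀ ^ r ^ (k + j) :=
      fun j => (Finset.mem_filter.mp (hf j)).2
    have hinj : Function.Injective f := by
      intro j j' he
      have h1 : ω i₀ ^ r ^ (k + j) = ω i₀ ^ r ^ (k + j') := by
        rw [← hfabs j, ← hfabs j', he]
      have h2 := hpowinj (ω i₀) hωpos₀ hω1 _ _ h1
      have h3 := Nat.pow_right_injective hr h2
      omega
    obtain ⟨x, hx, y, hy, hxy, hexy⟩ := Finset.exists_ne_map_eq_of_card_lt_of_maps_to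
      (s := Finset.range (S.card + 1)) (t := S) (by simp) (fun j _ => hfS j)
    exact hxy (hinj hexy)
  -- upward chain of moduli
  set Su : ℕ → Finset ℂ := fun h => S.filter (fun ζ => ‖ζ‖ ^ r ^ h = ω i₀) with hSudef
  have hSune0 : ∀ h, ∀ ζ ∈ Su h, ζ ≠ 0 := by
    intro h ζ hmem h0
    have h1 := (Finset.mem_filter.mp hmem).2
    rw [h0, norm_zero, zero_pow (by positivity : r ^ h ≠ 0)] at h1
    exact absurd h1.symm (ne_of_gt hωpos₀)
  have hbase : (B i₀).roots.toFinset ⊆ Su 0 := by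
    intro ζ hζ
    have hroot : (B i₀).IsRoot ζ := (Polynomial.mem_roots'.mp (Multiset.mem_toFinset.mp hζ)).2
    have hζ0 : ζ ≠ 0 := hrootne i₀ hi₀1 hi₀le ζ hroot
    rcases F1 ζ hζ0 (hfact0conv ζ hroot) with h | h
    · simp only [hSudef, Finset.mem_filter]
      exact ⟨h, by rw [pow_zero, pow_one, habs i₀ hi₀1 hi₀le ζ hroot]⟩
    · exfalso
      have hmem : ζ ^ r ∈ Sd 1 := by
        simp only [hSddef, Finset.mem_filter]
        exact ⟨h, by rw [norm_pow, habs i₀ hi₀1 hi₀le ζ hroot, pow_one]⟩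
      rw [down_empty 1 le_rfl] at hmem
      exact absurd hmem (Finset.notMem_empty _)
  have hupbase : t i₀ ≤ (Su 0).card := by
    rw [← ht i₀ hi₀1 hi₀le]
    exact Finset.card_le_card hbase
  have hupstep : ∀ h : ℕ, r * (Su h).card ≤ (Su (h + 1)).card + (r - 1) * t i₀ := by
    intro h
    set W : Finset ℂ := (Su h).biUnion
        (fun ζ => ((Polynomial.X : Polynomial ℂ) ^ r - Polynomial.C ζ).roots.toFinset) with hWdef
    have hWval : ∀ η ∈ W, η ^ r ∈ Su h ∧ η ≠ 0 := by
      intro η hη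
      obtain ⟨ζ, hζ, hηmem⟩ := Finset.mem_biUnion.mp hη
      have hroot := (Polynomial.mem_roots'.mp (Multiset.mem_toFinset.mp hηmem)).2
      have hηr : η ^ r = ζ := by
        simp only [Polynomial.IsRoot, Polynomial.eval_sub, Polynomial.eval_pow,
          Polynomial.eval_X, Polynomial.eval_C, sub_eq_zero] at hroot
        exact hroot
      constructor
      · rw [hηr]; exact hζ
      · intro h0
        apply hSune0 h ζ hζ
        rw [← hηr, h0, zero_pow (by omega : r ≠ 0)]
    have hcardW : W.card = r * (Su h).card := by
      rw [hWdef, Finset.card_biUnion]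
      · have hcard1 : ∀ ζ ∈ Su h,
            (((Polynomial.X : Polynomial ℂ) ^ r - Polynomial.C ζ).roots.toFinset).card = r := by
          intro ζ hζ
          have hζ0 : ζ ≠ 0 := hSune0 h ζ hζ
          have hsep : ((Polynomial.X : Polynomial ℂ) ^ r - Polynomial.C ζ).Separable :=
            Polynomial.separable_X_pow_sub_C ζ (Nat.cast_ne_zero.mpr (by omega)) hζ0
          rw [Multiset.toFinset_card_of_nodup (Polynomial.nodup_roots hsep),
            Polynomial.splits_iff_card_roots.mp (IsAlgClosed.splits _),
            Polynomial.natDegree_X_pow_sub_C]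
        rw [Finset.sum_congr rfl hcard1, Finset.sum_const, smul_eq_mul, mul_comm]
      · intro ζ hζ ζ' hζ' hne
        simp only [Finset.disjoint_left]
        intro η hη hη'
        apply hne
        have e1 := (Polynomial.mem_roots'.mp (Multiset.mem_toFinset.mp hη)).2
        have e2 := (Polynomial.mem_roots'.mp (Multiset.mem_toFinset.mp hη')).2
        simp only [Polynomial.IsRoot, Polynomial.eval_sub, Polynomial.eval_pow,
          Polynomial.eval_X, Polynomial.eval_C, sub_eq_zero] at e1 e2
        rw [← e1, ← e2]
    set Zf : Finset ℕ := (Finset.Icc 1 m).filter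
        (fun j => u j ≠ 0 ∧ ω j ^ r ^ (h + 1) = ω i₀) with hZfdef
    set Z : Finset ℂ := Zf.biUnion (fun j => (B j).roots.toFinset) with hZdef
    have hsub : W ⊆ Su (h + 1) ∪ Z := by
      intro η hη
      obtain ⟨hηS, hη0⟩ := hWval η hη
      have hζabs : ‖η ^ r‖ ^ r ^ h = ω i₀ := (Finset.mem_filter.mp hηS).2
      have hηabs : ‖η‖ ^ r ^ (h + 1) = ω i₀ := by
        rw [pow_succ', pow_mul, ← norm_pow]
        exact hζabs
      rcases F2 η hη0 ((Finset.mem_filter.mp hηS).1) with hmem | hrr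
      · exact Finset.mem_union_left _ (Finset.mem_filter.mpr ⟨hmem, hηabs⟩)
      · obtain ⟨j, hj1, hjm, huj, hjroot⟩ := hfact0fwd η hrr
        apply Finset.mem_union_right
        apply Finset.mem_biUnion.mpr
        refine ⟨j, ?_, Multiset.mem_toFinset.mpr (Polynomial.mem_roots'.mpr ⟨hB_ne j hjm, hjroot⟩)⟩
        simp only [hZfdef, Finset.mem_filter, Finset.mem_Icc]
        refine ⟨⟨hj1, hjm⟩, huj, ?_⟩
        rw [← habs j hj1 hjm η hjroot]
        exact hηabs
    have hZcard : Z.card ≤ (r - 1) * t i₀ := by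
      have hbound : ∀ j ∈ Zf, ((B j).roots.toFinset).card ≤ (r - 1) * t i₀ := by
        intro j hj
        have hj' := Finset.mem_filter.mp hj
        have hj1 : 1 ≤ j := (Finset.mem_Icc.mp hj'.1).1
        have hjm : j ≤ m := (Finset.mem_Icc.mp hj'.1).2
        have hjne : j ≠ m := by
          intro he
          apply hω1
          have h5 := hj'.2.2
          rw [he, hωm, one_pow] at h5
          exact h5.symm
        rw [ht j hj1 hjm]
        exact hrt i₀ j hi₀1 hi₀m hj1 (lt_of_le_of_ne hjm hjne)
      have hZf1 : Zf.card ≤ 1 := by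
        rw [Finset.card_le_one]
        intro j hj j' hj'
        have h1 := Finset.mem_filter.mp hj
        have h2 := Finset.mem_filter.mp hj'
        by_contra hne
        apply hωdist j j' (Finset.mem_Icc.mp h1.1).1 (Finset.mem_Icc.mp h1.1).2
          (Finset.mem_Icc.mp h2.1).1 (Finset.mem_Icc.mp h2.1).2 hne
        apply hpowxy _ _ (hωpos j (Finset.mem_Icc.mp h1.1).1 (Finset.mem_Icc.mp h1.1).2)
          (hωpos j' (Finset.mem_Icc.mp h2.1).1 (Finset.mem_Icc.mp h2.1).2) (r ^ (h + 1))
          (by positivity)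
        rw [h1.2.2, h2.2.2]
      calc Z.card ≤ ∑ j ∈ Zf, ((B j).roots.toFinset).card := Finset.card_biUnion_le
        _ ≤ ∑ _j ∈ Zf, (r - 1) * t i₀ := Finset.sum_le_sum hbound
        _ = Zf.card * ((r - 1) * t i₀) := by rw [Finset.sum_const, smul_eq_mul]
        _ ≤ 1 * ((r - 1) * t i₀) := Nat.mul_le_mul_right _ hZf1
        _ = (r - 1) * t i₀ := one_mul _
    calc r * (Su h).card = W.card := hcardW.symm
      _ ≤ (Su (h + 1) ∪ Z).card := Finset.card_le_card hsub
      _ ≤ (Su (h + 1)).card + Z.card := Finset.card_union_le _ _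
      _ ≤ (Su (h + 1)).card + (r - 1) * t i₀ := by omega
  have hupall : ∀ h : ℕ, t i₀ ≤ (Su h).card := by
    intro h
    induction h with
    | zero => exact hupbase
    | succ h ih =>
      have hs := hupstep h
      have h1 : r * t i₀ ≤ r * (Su h).card := Nat.mul_le_mul_left r ih
      have h2a : (r - 1) * t i₀ = r * t i₀ - t i₀ := Nat.sub_one_mul r (t i₀)
      have h2b : t i₀ ≤ r * t i₀ := Nat.le_mul_of_pos_left _ hr0
      omega
  have hdisj : ∀ h h' : ℕ, h ≠ h' → Disjoint (Su h) (Su h') := by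
    intro h h' hne
    rw [Finset.disjoint_left]
    intro ζ hζ hζ'
    have e1 := (Finset.mem_filter.mp hζ).2
    have e2 := (Finset.mem_filter.mp hζ').2
    have hζ0 : ζ ≠ 0 := hSune0 h ζ hζ
    have hx1 : ‖ζ‖ ≠ 1 := by
      intro hone
      rw [hone, one_pow] at e1
      exact hω1 e1.symm
    have hxpos : 0 < ‖ζ‖ := norm_pos_iff.mpr hζ0
    exact hne (Nat.pow_right_injective hr (hpowinj _ hxpos hx1 _ _ (e1.trans e2.symm)))
  -- final contradiction
  have hsub2 : (Finset.range (S.card + 1)).biUnion Su ⊆ S := by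
    intro ζ hζ
    obtain ⟨h, _, hmem⟩ := Finset.mem_biUnion.mp hζ
    exact (Finset.mem_filter.mp hmem).1
  have hcard2 : ((Finset.range (S.card + 1)).biUnion Su).card
      = ∑ h ∈ Finset.range (S.card + 1), (Su h).card :=
    Finset.card_biUnion (fun x _ y _ hne => hdisj x y hne)
  have hge : S.card + 1 ≤ ∑ h ∈ Finset.range (S.card + 1), (Su h).card := by
    calc S.card + 1 = ∑ _h ∈ Finset.range (S.card + 1), 1 := by
          rw [Finset.sum_const, smul_eq_mul, mul_one, Finset.card_range]
      _ ≤ ∑ h ∈ Finset.range (S.card + 1), (Su h).card :=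
          Finset.sum_le_sum (fun h _ => le_trans (ht1 i₀ hi₀1 hi₀le) (hupall h))
  have hcontr : S.card + 1 ≤ S.card := by
    calc S.card + 1 ≤ ∑ h ∈ Finset.range (S.card + 1), (Su h).card := hge
      _ = ((Finset.range (S.card + 1)).biUnion Su).card := hcard2.symm
      _ ≤ S.card := Finset.card_le_card hsub2
  omega

end Lemma1Aux

open Lemma1Aux in
theorem lemma1_rationality
    (r : ℕ) (hr : 2 ≤ r) (a : ℂ) (ha : a ≠ 0) (m : ℕ) (hm : 1 ≤ m)
    (A B : ℕ → Polynomial ℂ) (t : ℕ → ℕ) (ω : ℕ → ℝ)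
    (hA_ne : ∀ i ≤ m, A i ≠ 0) (hB_ne : ∀ i ≤ m, B i ≠ 0)
    (hA0 : ∀ i ≤ m, (A i).coeff 0 = 0)
    (hB0 : B 0 = 1)
    (hcop : ∀ i, 1 ≤ i → i ≤ m → IsCoprime (A i) (B i))
    (hmonic : ∀ i, 1 ≤ i → i ≤ m → (B i).Monic)
    (hnconst : ∀ i, 1 ≤ i → i ≤ m → 0 < (B i).natDegree)
    (hdist : ∀ i j, 1 ≤ i → i ≤ m → 1 ≤ j → j ≤ m → i ≠ j → B i ≠ B j)
    (ht : ∀ i, 1 ≤ i → i ≤ m → ((B i).roots.toFinset.card = t i))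
    (hω : ∀ i, 1 ≤ i → i ≤ m → ∀ z ∈ (B i).roots, ‖z‖ = ω i)
    (hωdist : ∀ i j, 1 ≤ i → i ≤ m → 1 ≤ j → j ≤ m → i ≠ j → ω i ≠ ω j)
    (hωm : ω m = 1)
    (hrt : ∀ i j, 1 ≤ i → i < m → 1 ≤ j → j < m → t j ≤ (r - 1) * t i)
    (u : ℕ → ℂ) :
    IsRationalPS
      (∑ i ∈ Finset.range (m + 1),
        PowerSeries.C (u i) *
          seriesSum (fun h =>
            PowerSeries.C (a ^ h) * ((A i).comp (Polynomial.X ^ r ^ h) : PowerSeries ℂ) *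
              (((B i).comp (Polynomial.X ^ r ^ h) : PowerSeries ℂ))⁻¹)) ↔
    ((∀ i, 1 ≤ i → i < m → u i = 0) ∧
      IsRationalPS
        (PowerSeries.C (u 0) *
            seriesSum (fun h =>
              PowerSeries.C (a ^ h) * ((A 0).comp (Polynomial.X ^ r ^ h) : PowerSeries ℂ) *
                (((B 0).comp (Polynomial.X ^ r ^ h) : PowerSeries ℂ))⁻¹) +
          PowerSeries.C (u m) *
            seriesSum (fun h =>
              PowerSeries.C (a ^ h) * ((A m).comp (Polynomial.X ^ r ^ h) : PowerSeries ℂ) *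
                (((B m).comp (Polynomial.X ^ r ^ h) : PowerSeries ℂ))⁻¹))) := by
  have hreduce : (∀ i, 1 ≤ i → i < m → u i = 0) →
      (∑ i ∈ Finset.range (m + 1),
        PowerSeries.C (u i) *
          seriesSum (fun h =>
            PowerSeries.C (a ^ h) * ((A i).comp (Polynomial.X ^ r ^ h) : PowerSeries ℂ) *
              (((B i).comp (Polynomial.X ^ r ^ h) : PowerSeries ℂ))⁻¹))
      = PowerSeries.C (u 0) *
            seriesSum (fun h =>
              PowerSeries.C (a ^ h) * ((A 0).comp (Polynomial.X ^ r ^ h) : PowerSeries ℂ) *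
                (((B 0).comp (Polynomial.X ^ r ^ h) : PowerSeries ℂ))⁻¹) +
          PowerSeries.C (u m) *
            seriesSum (fun h =>
              PowerSeries.C (a ^ h) * ((A m).comp (Polynomial.X ^ r ^ h) : PowerSeries ℂ) *
                (((B m).comp (Polynomial.X ^ r ^ h) : PowerSeries ℂ))⁻¹) := by
    intro hmid
    have hz : ∀ i ∈ Finset.Ico 1 m,
        PowerSeries.C (u i) *
          seriesSum (fun h =>
            PowerSeries.C (a ^ h) * ((A i).comp (Polynomial.X ^ r ^ h) : PowerSeries ℂ) *
              (((B i).comp (Polynomial.X ^ r ^ h) : PowerSeries ℂ))⁻¹) = (0 : PowerSeries ℂ) := by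
      intro i hi
      obtain ⟨h1, h2⟩ := Finset.mem_Ico.mp hi
      rw [hmid i h1 h2, map_zero, zero_mul]
    rw [Finset.sum_range_succ, Finset.range_eq_Ico,
      Finset.sum_eq_sum_Ico_succ_bot (show 0 < m by omega),
      Finset.sum_congr rfl hz, Finset.sum_const, smul_zero, add_zero]
  constructor
  · intro hL
    have hmid := main_forward r hr a ha m hm A B t ω hB_ne hA0 hB0 hcop hnconst ht hω hωdist
      hωm hrt u hL
    refine ⟨hmid, ?_⟩
    rw [← hreduce hmid]
    exact hL
  · rintro ⟨hmid, hrat⟩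
    rw [hreduce hmid]
    exact hrat
end
end

section
/- Let ζ := e^{πi/3}. For every complex number z with |z| < 1, Σ_{h=0}^∞ ( ζ^{−2}·z^{2^h}/(z^{2^{h+1}} − ζ²) + ζ²·z^{2^h}/(z^{2^{h+1}} − ζ⁴) ) = (2z² + z)/(z² + z + 1). -/
open Complex Finset Filter Topology

lemma alg_key (w x : ℂ) (hw : w ^ 2 + w + 1 = 0)
    (h1 : x ^ 2 - w ≠ 0) (h2 : x ^ 2 - w ^ 2 ≠ 0)
    (h3 : x ^ 2 + x + 1 ≠ 0) (h4 : x ^ 4 + x ^ 2 + 1 ≠ 0) :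
    w⁻¹ * x / (x ^ 2 - w) + w * x / (x ^ 2 - w ^ 2)
      = (2 * x ^ 2 + x) / (x ^ 2 + x + 1) - (2 * x ^ 4 + x ^ 2) / (x ^ 4 + x ^ 2 + 1) := by
  have hwi : w⁻¹ = w ^ 2 :=
    inv_eq_of_mul_eq_one_right (by linear_combination (w - 1) * hw)
  rw [hwi, div_add_div _ _ h1 h2]
  have hd : (x ^ 2 - w) * (x ^ 2 - w ^ 2) = x ^ 4 + x ^ 2 + 1 := by
    linear_combination (w - 1 - x ^ 2) * hw
  rw [hd]
  have hn : w ^ 2 * x * (x ^ 2 - w ^ 2) + (x ^ 2 - w) * (w * x) = x - x ^ 3 := by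
    linear_combination (x ^ 3 - x * (w ^ 2 - w + 1)) * hw
  rw [hn]
  rw [div_sub_div _ _ h3 h4, div_eq_div_iff h4 (mul_ne_zero h3 h4)]
  ring

lemma exp_pi_div_three : Complex.exp (Real.pi * Complex.I / 3)
    = 1 / 2 + (Real.sqrt 3 / 2 : ℝ) * Complex.I := by
  have h : Real.pi * Complex.I / 3 = (↑(Real.pi / 3) : ℂ) * Complex.I := by
    push_cast; ring
  rw [h, Complex.exp_mul_I, ← Complex.ofReal_cos, ← Complex.ofReal_sin,
    Real.cos_pi_div_three, Real.sin_pi_div_three]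
  push_cast
  ring

lemma root_rel : (Complex.exp (Real.pi * Complex.I / 3) ^ 2) ^ 2
    + Complex.exp (Real.pi * Complex.I / 3) ^ 2 + 1 = 0 := by
  rw [exp_pi_div_three]
  have ht : ((Real.sqrt 3 : ℝ) : ℂ) ^ 2 = 3 := by
    norm_cast
    rw [Real.sq_sqrt] <;> norm_num
  have hI : Complex.I ^ 2 = -1 := Complex.I_sq
  push_cast
  set t : ℂ := ((Real.sqrt 3 : ℝ) : ℂ)
  linear_combination (5/8 * t ^ 2 + 1/4 * t ^ 3 * Complex.I - 1/16 * t ^ 4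
      + 1/16 * t ^ 4 * Complex.I ^ 2) * hI
    + (-7/16 - 1/4 * t * Complex.I + 1/16 * t ^ 2) * ht

lemma abs_w : ‖Complex.exp (Real.pi * Complex.I / 3) ^ 2‖ = 1 := by
  rw [norm_pow, Complex.norm_exp]
  simp

open Complex in
theorem reciprocal_sum_case3 (z : ℂ) (hz : ‖z‖ < 1) :
    ∑' h : ℕ,
      ((Complex.exp (Real.pi * Complex.I / 3) ^ 2)⁻¹ * z ^ 2 ^ h /
          (z ^ 2 ^ (h + 1) - Complex.exp (Real.pi * Complex.I / 3) ^ 2) +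
        Complex.exp (Real.pi * Complex.I / 3) ^ 2 * z ^ 2 ^ h /
          (z ^ 2 ^ (h + 1) - Complex.exp (Real.pi * Complex.I / 3) ^ 4)) =
      (2 * z ^ 2 + z) / (z ^ 2 + z + 1) := by
  set w : ℂ := Complex.exp (Real.pi * Complex.I / 3) ^ 2 with hwdef
  have hw : w ^ 2 + w + 1 = 0 := root_rel
  have habs : ‖w‖ = 1 := abs_w
  have hw4 : Complex.exp (Real.pi * Complex.I / 3) ^ 4 = w ^ 2 := by
    rw [hwdef]; ring
  -- abbreviations
  set G : ℂ → ℂ := fun x => (2 * x ^ 2 + x) / (x ^ 2 + x + 1) with hG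
  set f : ℕ → ℂ := fun h =>
      w⁻¹ * z ^ 2 ^ h / (z ^ 2 ^ (h + 1) - w) +
        w * z ^ 2 ^ h / (z ^ 2 ^ (h + 1) - Complex.exp (Real.pi * Complex.I / 3) ^ 4) with hf
  -- basic smallness facts
  have habs_pow : ∀ n : ℕ, 1 ≤ n → ‖z ^ n‖ < 1 := by
    intro n hn
    rw [norm_pow]
    calc ‖z‖ ^ n ≤ ‖z‖ ^ 1 :=
          pow_le_pow_of_le_one (norm_nonneg z) hz.le hn
      _ < 1 := by simpa using hz
  have hne : ∀ x : ℂ, ‖x‖ < 1 → x ^ 2 + x + 1 ≠ 0 := by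
    intro x hx h0
    have hfac : (x - w) * (x - w ^ 2) = x ^ 2 + x + 1 := by
      linear_combination (w - 1 - x) * hw
    rw [← hfac] at h0
    rcases mul_eq_zero.mp h0 with h | h
    · have : x = w := sub_eq_zero.mp h
      rw [this, habs] at hx; exact absurd hx (by norm_num)
    · have : x = w ^ 2 := sub_eq_zero.mp h
      rw [this] at hx
      rw [norm_pow, habs] at hx; norm_num at hx
  have hsub : ∀ x : ℂ, ‖x‖ < 1 → ∀ u : ℂ, ‖u‖ = 1 → x - u ≠ 0 := by
    intro x hx u hu h0
    have : x = u := sub_eq_zero.mp h0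
    rw [this, hu] at hx; exact absurd hx (by norm_num)
  -- telescoping form
  have hstep : ∀ h : ℕ, f h = G (z ^ 2 ^ h) - G (z ^ 2 ^ (h + 1)) := by
    intro h
    have hx : ‖z ^ 2 ^ h‖ < 1 := habs_pow _ (Nat.one_le_two_pow)
    have hpow : z ^ 2 ^ (h + 1) = (z ^ 2 ^ h) ^ 2 := by
      rw [← pow_mul, ← pow_succ]
    set x := z ^ 2 ^ h with hxd
    have hx2 : ‖x ^ 2‖ < 1 := by
      rw [← hpow]; exact habs_pow _ (Nat.one_le_two_pow)
    have h1 : x ^ 2 - w ≠ 0 := hsub _ hx2 _ habs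
    have h2 : x ^ 2 - w ^ 2 ≠ 0 := hsub _ hx2 _ (by rw [norm_pow, habs]; norm_num)
    have h3 : x ^ 2 + x + 1 ≠ 0 := hne _ hx
    have h4 : x ^ 4 + x ^ 2 + 1 ≠ 0 := by
      have := hne _ hx2
      intro h0; apply this; linear_combination h0
    have key := alg_key w x hw h1 h2 h3 h4
    simp only [hf, hG, hpow, hw4]
    rw [key]
    congr 1
    ring
  -- partial sums
  have hpartial : ∀ n : ℕ, ∑ h ∈ Finset.range n, f h = G z - G (z ^ 2 ^ n) := by
    intro n
    have := Finset.sum_range_sub' (fun h => G (z ^ 2 ^ h)) n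
    calc ∑ h ∈ Finset.range n, f h
        = ∑ h ∈ Finset.range n, (G (z ^ 2 ^ h) - G (z ^ 2 ^ (h + 1))) := by
          exact Finset.sum_congr rfl fun h _ => hstep h
      _ = G (z ^ 2 ^ 0) - G (z ^ 2 ^ n) := this
      _ = G z - G (z ^ 2 ^ n) := by norm_num
  -- summability
  have hsummable : Summable f := by
    apply Summable.of_norm_bounded (g := fun n => 2 / (1 - ‖z‖) * ‖z‖ ^ n)
      (Summable.mul_left _ (summable_geometric_of_lt_one (norm_nonneg z) hz))
    intro h
    have hx : ‖z ^ 2 ^ h‖ ≤ ‖z‖ ^ h := by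
      rw [norm_pow]
      exact pow_le_pow_of_le_one (norm_nonneg z) hz.le (Nat.le_of_lt (Nat.lt_two_pow_self (n := h))) |>.trans_eq rfl
    have hx2 : ‖z ^ 2 ^ (h+1)‖ ≤ ‖z‖ := by
      rw [norm_pow]
      calc ‖z‖ ^ 2 ^ (h+1) ≤ ‖z‖ ^ 1 :=
            pow_le_pow_of_le_one (norm_nonneg z) hz.le Nat.one_le_two_pow
        _ = ‖z‖ := pow_one _
    have hden : ∀ u : ℂ, ‖u‖ = 1 → 1 - ‖z‖ ≤ ‖z ^ 2 ^ (h+1) - u‖ := by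
      intro u hu
      calc 1 - ‖z‖ ≤ ‖u‖ - ‖z ^ 2 ^ (h+1)‖ := by
            rw [hu]; linarith
        _ ≤ ‖z ^ 2 ^ (h+1) - u‖ := by
            rw [norm_sub_rev]
            exact norm_sub_norm_le u (z ^ 2 ^ (h+1))
    have hzlt : 0 < 1 - ‖z‖ := by linarith
    have habs1 : ‖w⁻¹‖ = 1 := by rw [norm_inv, habs]; norm_num
    have habs2 : ‖Complex.exp (Real.pi * Complex.I / 3) ^ 4‖ = 1 := by
      rw [hw4, norm_pow, habs]; norm_num
    have bnd : ∀ (c u : ℂ), ‖c‖ = 1 → ‖u‖ = 1 →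
        ‖c * z ^ 2 ^ h / (z ^ 2 ^ (h+1) - u)‖ ≤
          ‖z‖ ^ h / (1 - ‖z‖) := by
      intro c u hc hu
      rw [norm_div, norm_mul, hc, one_mul]
      apply div_le_div₀ (by positivity) hx (by linarith [hden u hu]) (hden u hu)
    calc ‖f h‖ ≤ ‖w⁻¹ * z ^ 2 ^ h / (z ^ 2 ^ (h+1) - w)‖
          + ‖w * z ^ 2 ^ h / (z ^ 2 ^ (h+1) - Complex.exp (Real.pi * Complex.I / 3) ^ 4)‖ := by
          exact norm_add_le _ _
      _ ≤ ‖z‖ ^ h / (1 - ‖z‖) + ‖z‖ ^ h / (1 - ‖z‖) :=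
          add_le_add (bnd _ _ habs1 habs) (bnd _ _ habs habs2)
      _ = 2 / (1 - ‖z‖) * ‖z‖ ^ h := by ring
  -- limits
  have htend0 : Tendsto (fun n : ℕ => z ^ 2 ^ n) atTop (𝓝 0) := by
    have h1 : Tendsto (fun k : ℕ => z ^ k) atTop (𝓝 0) :=
      tendsto_pow_atTop_nhds_zero_of_norm_lt_one (by simpa using hz)
    have h2 : Tendsto (fun n : ℕ => 2 ^ n) atTop atTop :=
      tendsto_pow_atTop_atTop_of_one_lt (by norm_num)
    exact h1.comp h2
  have hGtend : Tendsto (fun n : ℕ => G (z ^ 2 ^ n)) atTop (𝓝 0) := by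
    have hnum : Tendsto (fun n : ℕ => 2 * (z ^ 2 ^ n) ^ 2 + z ^ 2 ^ n) atTop (𝓝 0) := by
      have := ((htend0.pow 2).const_mul (2:ℂ)).add htend0
      simpa using this
    have hden : Tendsto (fun n : ℕ => (z ^ 2 ^ n) ^ 2 + z ^ 2 ^ n + 1) atTop (𝓝 1) := by
      have := ((htend0.pow 2).add htend0).add_const (1:ℂ)
      simpa using this
    have := hnum.div hden one_ne_zero
    simpa only [hG, zero_div, Pi.div_def] using this
  have hplim : Tendsto (fun n => ∑ h ∈ Finset.range n, f h) atTop (𝓝 (G z)) := by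
    simp only [hpartial]
    have := (tendsto_const_nhds (x := G z) (f := atTop (α := ℕ))).sub hGtend
    simpa using this
  have : HasSum f (G z) := by
    rw [Summable.hasSum_iff_tendsto_nat hsummable]
    exact hplim
  rw [this.tsum_eq, hG]
end

section
/- Let ζ := e^{πi/3}. For every complex number z with |z| < 1, Σ_{h=0}^∞ (−1)^h ( (1/(1+ζ))·z^{2^h}/(z^{2^{h+1}} − ζ²) + (ζ/(1+ζ))·z^{2^h}/(z^{2^{h+1}} − ζ⁴) ) = z/(z² + z + 1). -/
open Complex Filter Finset

lemma aux_cubic_ne (v : ℂ) (hv : ‖v‖ < 1) : v ^ 2 + v + 1 ≠ 0 := by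
  intro h
  have h3 : v ^ 3 = 1 := by linear_combination (v - 1) * h
  have habs : ‖v‖ ^ 3 = 1 := by
    rw [← norm_pow, h3, norm_one]
  have h0 : 0 ≤ ‖v‖ := norm_nonneg v
  have := pow_lt_one₀ h0 hv (by norm_num : (3:ℕ) ≠ 0)
  linarith

lemma key_alg (ζ w : ℂ) (hq : ζ ^ 2 = ζ - 1) (h1 : 1 + ζ ≠ 0)
    (h2 : w ^ 2 - ζ ^ 2 ≠ 0) (h3 : w ^ 2 - ζ ^ 4 ≠ 0)
    (h4 : w ^ 2 + w + 1 ≠ 0) (h5 : (w ^ 2) ^ 2 + w ^ 2 + 1 ≠ 0) :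
    (1 / (1 + ζ)) * w / (w ^ 2 - ζ ^ 2) + (ζ / (1 + ζ)) * w / (w ^ 2 - ζ ^ 4) =
      w / (w ^ 2 + w + 1) + w ^ 2 / ((w ^ 2) ^ 2 + w ^ 2 + 1) := by
  rw [div_add_div _ _ h2 h3, div_add_div _ _ h4 h5, div_eq_div_iff (mul_ne_zero h2 h3) (mul_ne_zero h4 h5)]
  field_simp
  linear_combination ((1)*ζ^0*w^3 + (1)*ζ^0*w^4 + (1)*ζ^0*w^5 + (2)*ζ^1*w^3 + (2)*ζ^1*w^4 + (2)*ζ^1*w^5 + (2)*ζ^2*w^3 + (2)*ζ^2*w^4 + (3)*ζ^2*w^5 + (1)*ζ^2*w^6 + (1)*ζ^2*w^7 + (-1)*ζ^3*w^1 + (-1)*ζ^3*w^2 + (-1)*ζ^3*w^3 + (1)*ζ^3*w^5 + (1)*ζ^3*w^6 + (1)*ζ^3*w^7 + (-2)*ζ^4*w^1 + (-2)*ζ^4*w^2 + (-4)*ζ^4*w^3 + (-2)*ζ^4*w^4 + (-2)*ζ^4*w^5 + (-1)*ζ^5*w^1 + (-1)*ζ^5*w^2 + (-2)*ζ^5*w^3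 + (-1)*ζ^5*w^4 + (-1)*ζ^5*w^5) * hq

open Complex in
theorem reciprocal_sum_case4 (z : ℂ) (hz : ‖z‖ < 1) :
    ∑' h : ℕ,
      (-1 : ℂ) ^ h *
        ((1 / (1 + Complex.exp (Real.pi * Complex.I / 3))) * z ^ 2 ^ h /
            (z ^ 2 ^ (h + 1) - Complex.exp (Real.pi * Complex.I / 3) ^ 2) +
          (Complex.exp (Real.pi * Complex.I / 3) /
              (1 + Complex.exp (Real.pi * Complex.I / 3))) * z ^ 2 ^ h /
            (z ^ 2 ^ (h + 1) - Complex.exp (Real.pi * Complex.I / 3) ^ 4)) =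
      z / (z ^ 2 + z + 1) := by
  set ζ : ℂ := Complex.exp (Real.pi * Complex.I / 3) with hζdef
  have hrw : (Real.pi : ℂ) * Complex.I / 3 = ((Real.pi / 3 : ℝ) : ℂ) * Complex.I := by
    push_cast; ring
  have hζ3 : ζ ^ 3 = -1 := by
    rw [hζdef, ← Complex.exp_nat_mul]
    have : ((3:ℕ):ℂ) * ((Real.pi : ℂ) * Complex.I / 3) = Real.pi * Complex.I := by
      push_cast; ring
    rw [this, Complex.exp_pi_mul_I]
  have habsζ : ‖ζ‖ = 1 := by
    rw [hζdef, hrw, Complex.norm_exp_ofReal_mul_I]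
  have him : ζ.im = Real.sin (Real.pi / 3) := by
    rw [hζdef, hrw, Complex.exp_ofReal_mul_I_im]
  have hsin : 0 < Real.sin (Real.pi / 3) :=
    Real.sin_pos_of_pos_of_lt_pi (by positivity) (by linarith [Real.pi_pos])
  have h1 : 1 + ζ ≠ 0 := by
    intro h
    have hζeq : ζ = -1 := by linear_combination h
    rw [hζeq] at him
    simp at him
    have h3 : (0:ℝ) < Real.sqrt 3 := Real.sqrt_pos.mpr (by norm_num)
    nlinarith [him]
  have hq : ζ ^ 2 = ζ - 1 := by
    have h0 : (1 + ζ) * (ζ ^ 2 - ζ + 1) = 0 := by linear_combination hζ3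
    rcases mul_eq_zero.mp h0 with h | h
    · exact absurd h h1
    · linear_combination h
  set r : ℝ := ‖z‖ with hrdef
  have r0 : 0 ≤ r := norm_nonneg z
  have hpow : ∀ h : ℕ, z ^ 2 ^ (h + 1) = (z ^ 2 ^ h) ^ 2 := by
    intro h; rw [← pow_mul, pow_succ]
  have habsw : ∀ h : ℕ, ‖z ^ 2 ^ h‖ < 1 := by
    intro h
    rw [norm_pow]
    exact pow_lt_one₀ r0 hz (pow_ne_zero h two_ne_zero)
  have h2d : ∀ h : ℕ, (z ^ 2 ^ h) ^ 2 - ζ ^ 2 ≠ 0 := by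
    intro h
    refine sub_ne_zero.mpr ?_
    intro heq
    have e : ‖ζ ^ 2‖ = 1 := by rw [norm_pow, habsζ, one_pow]
    have habs : ‖(z ^ 2 ^ h) ^ 2‖ = ‖ζ ^ 2‖ := by rw [heq]
    rw [e, norm_pow] at habs
    nlinarith [habsw h, norm_nonneg (z ^ 2 ^ h)]
  have h3d : ∀ h : ℕ, (z ^ 2 ^ h) ^ 2 - ζ ^ 4 ≠ 0 := by
    intro h
    refine sub_ne_zero.mpr ?_
    intro heq
    have e : ‖ζ ^ 4‖ = 1 := by rw [norm_pow, habsζ, one_pow]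
    have habs : ‖(z ^ 2 ^ h) ^ 2‖ = ‖ζ ^ 4‖ := by rw [heq]
    rw [e, norm_pow] at habs
    nlinarith [habsw h, norm_nonneg (z ^ 2 ^ h)]
  have h4d : ∀ h : ℕ, (z ^ 2 ^ h) ^ 2 + z ^ 2 ^ h + 1 ≠ 0 := fun h =>
    aux_cubic_ne _ (habsw h)
  have h5d : ∀ h : ℕ, ((z ^ 2 ^ h) ^ 2) ^ 2 + (z ^ 2 ^ h) ^ 2 + 1 ≠ 0 := by
    intro h
    apply aux_cubic_ne
    rw [norm_pow]
    exact pow_lt_one₀ (norm_nonneg _) (habsw h) two_ne_zero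
  set u : ℕ → ℂ := fun h => (-1 : ℂ) ^ h * (z ^ 2 ^ h / ((z ^ 2 ^ h) ^ 2 + z ^ 2 ^ h + 1))
    with hudef
  have hfu : ∀ h : ℕ,
      (-1 : ℂ) ^ h * ((1 / (1 + ζ)) * z ^ 2 ^ h / (z ^ 2 ^ (h + 1) - ζ ^ 2) +
        (ζ / (1 + ζ)) * z ^ 2 ^ h / (z ^ 2 ^ (h + 1) - ζ ^ 4)) = u h - u (h + 1) := by
    intro h
    have key := key_alg ζ (z ^ 2 ^ h) hq h1 (h2d h) (h3d h) (h4d h) (h5d h)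
    simp only [hudef, hpow]
    linear_combination ((-1 : ℂ) ^ h) * key
  -- norm bound
  have hrpos : 0 < 1 - r := by linarith
  have hdensub : ∀ (h : ℕ) (c : ℂ), ‖c‖ = 1 →
      1 - r ≤ ‖z ^ 2 ^ (h + 1) - c‖ := by
    intro h c hc
    have hle : ‖z ^ 2 ^ (h + 1)‖ ≤ r := by
      rw [norm_pow]
      exact pow_le_of_le_one r0 hz.le (by positivity : (0:ℕ) < 2 ^ (h + 1)).ne'
    have hsub : ‖c‖ - ‖z ^ 2 ^ (h + 1)‖ ≤ ‖c - z ^ 2 ^ (h + 1)‖ := norm_sub_norm_le _ _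
    rw [norm_sub_rev] at hsub
    rw [hc] at hsub
    linarith
  have hnum : ∀ h : ℕ, r ^ 2 ^ h ≤ r ^ h :=
    fun h => pow_le_pow_of_le_one r0 hz.le (Nat.lt_two_pow_self (n := h)).le
  set c1 : ℝ := ‖1 / (1 + ζ)‖ with hc1
  set c2 : ℝ := ‖ζ / (1 + ζ)‖ with hc2
  have hbound : ∀ h : ℕ,
      ‖(-1 : ℂ) ^ h * ((1 / (1 + ζ)) * z ^ 2 ^ h / (z ^ 2 ^ (h + 1) - ζ ^ 2) +
        (ζ / (1 + ζ)) * z ^ 2 ^ h / (z ^ 2 ^ (h + 1) - ζ ^ 4))‖ ≤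
      (c1 + c2) / (1 - r) * r ^ h := by
    intro h
    have e2 : ‖ζ ^ 2‖ = 1 := by rw [norm_pow, habsζ, one_pow]
    have e4 : ‖ζ ^ 4‖ = 1 := by rw [norm_pow, habsζ, one_pow]
    have hA : ‖(1 / (1 + ζ)) * z ^ 2 ^ h / (z ^ 2 ^ (h + 1) - ζ ^ 2)‖ ≤
        c1 * r ^ h / (1 - r) := by
      rw [norm_div, norm_mul, norm_pow]
      have hc1n : (0:ℝ) ≤ c1 := hc1 ▸ norm_nonneg _
      exact div_le_div₀ (by positivity)
        (mul_le_mul_of_nonneg_left (hnum h) hc1n) hrpos (hdensub h _ e2)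
    have hB : ‖(ζ / (1 + ζ)) * z ^ 2 ^ h / (z ^ 2 ^ (h + 1) - ζ ^ 4)‖ ≤
        c2 * r ^ h / (1 - r) := by
      rw [norm_div, norm_mul, norm_pow]
      have hc2n : (0:ℝ) ≤ c2 := hc2 ▸ norm_nonneg _
      exact div_le_div₀ (by positivity)
        (mul_le_mul_of_nonneg_left (hnum h) hc2n) hrpos (hdensub h _ e4)
    calc ‖(-1 : ℂ) ^ h * ((1 / (1 + ζ)) * z ^ 2 ^ h / (z ^ 2 ^ (h + 1) - ζ ^ 2) +
            (ζ / (1 + ζ)) * z ^ 2 ^ h / (z ^ 2 ^ (h + 1) - ζ ^ 4))‖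
        = ‖(1 / (1 + ζ)) * z ^ 2 ^ h / (z ^ 2 ^ (h + 1) - ζ ^ 2) +
            (ζ / (1 + ζ)) * z ^ 2 ^ h / (z ^ 2 ^ (h + 1) - ζ ^ 4)‖ := by
          simp [norm_mul, norm_pow]
      _ ≤ ‖(1 / (1 + ζ)) * z ^ 2 ^ h / (z ^ 2 ^ (h + 1) - ζ ^ 2)‖ +
            ‖(ζ / (1 + ζ)) * z ^ 2 ^ h / (z ^ 2 ^ (h + 1) - ζ ^ 4)‖ :=
          norm_add_le _ _
      _ ≤ c1 * r ^ h / (1 - r) + c2 * r ^ h / (1 - r) := add_le_add hA hB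
      _ = (c1 + c2) / (1 - r) * r ^ h := by ring
  have hsn : Summable (fun h : ℕ =>
      ‖(-1 : ℂ) ^ h * ((1 / (1 + ζ)) * z ^ 2 ^ h / (z ^ 2 ^ (h + 1) - ζ ^ 2) +
        (ζ / (1 + ζ)) * z ^ 2 ^ h / (z ^ 2 ^ (h + 1) - ζ ^ 4))‖) :=
    Summable.of_nonneg_of_le (fun h => norm_nonneg _) hbound
      ((summable_geometric_of_lt_one r0 hz).mul_left _)
  have hun : Tendsto u atTop (nhds 0) := by
    rw [tendsto_zero_iff_norm_tendsto_zero]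
    have heq : ∀ n : ℕ, ‖u n‖ = ‖z ^ 2 ^ n / ((z ^ 2 ^ n) ^ 2 + z ^ 2 ^ n + 1)‖ := by
      intro n
      simp [hudef, norm_mul, norm_pow]
    rw [tendsto_congr heq]
    have h20 : Tendsto (fun n : ℕ => z ^ 2 ^ n) atTop (nhds 0) := by
      have hgeo : Tendsto (fun k : ℕ => z ^ k) atTop (nhds 0) :=
        tendsto_pow_atTop_nhds_zero_of_norm_lt_one
          (by simpa using hz)
      exact hgeo.comp (tendsto_pow_atTop_atTop_of_one_lt one_lt_two)
    have hcont : Tendsto (fun v : ℂ => ‖v / (v ^ 2 + v + 1)‖) (nhds 0) (nhds 0) := by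
      have hca : ContinuousAt (fun v : ℂ => v / (v ^ 2 + v + 1)) 0 := by
        apply ContinuousAt.div (by fun_prop) (by fun_prop)
        norm_num
      have h0 : (fun v : ℂ => v / (v ^ 2 + v + 1)) 0 = 0 := by norm_num
      simpa [h0] using hca.norm.tendsto
    exact hcont.comp h20
  have hHasSum : HasSum (fun h : ℕ =>
      (-1 : ℂ) ^ h * ((1 / (1 + ζ)) * z ^ 2 ^ h / (z ^ 2 ^ (h + 1) - ζ ^ 2) +
        (ζ / (1 + ζ)) * z ^ 2 ^ h / (z ^ 2 ^ (h + 1) - ζ ^ 4)))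
      (z / (z ^ 2 + z + 1)) := by
    rw [hasSum_iff_tendsto_nat_of_summable_norm hsn]
    have hps : ∀ n : ℕ, (∑ i ∈ Finset.range n,
        (-1 : ℂ) ^ i * ((1 / (1 + ζ)) * z ^ 2 ^ i / (z ^ 2 ^ (i + 1) - ζ ^ 2) +
          (ζ / (1 + ζ)) * z ^ 2 ^ i / (z ^ 2 ^ (i + 1) - ζ ^ 4))) = u 0 - u n := by
      intro n
      rw [Finset.sum_congr rfl (fun i _ => hfu i)]
      exact Finset.sum_range_sub' u n
    rw [tendsto_congr hps]
    have hu0 : u 0 = z / (z ^ 2 + z + 1) := by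
      simp [hudef]
    rw [← hu0]
    simpa using
      ((tendsto_const_nhds : Tendsto (fun _ : ℕ => u 0) atTop (nhds (u 0))).sub hun)
  exact hHasSum.tsum_eq
end

section
/- Let r ≥ 2 be an integer, a a non-zero complex number, and A ∈ ℂ[z] a non-zero polynomial with A(0) = 0 and deg A ≤ r−1. Then the formal power series g(z) := Σ_{h=0}^∞ a^h A(z^{r^h}) is not rational. -/
noncomputable section

theorem polynomial_mahler_series_not_rational
    (r : ℕ) (hr : 2 ≤ r) (a : ℂ) (ha : a ≠ 0)
    (A : Polynomial ℂ) (hA : A ≠ 0) (hA0 : A.coeff 0 = 0)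
    (hdeg : A.natDegree ≤ r - 1) :
    ¬ IsRationalPS
      (seriesSum fun h =>
        PowerSeries.C (a ^ h) * ((A.comp (Polynomial.X ^ r ^ h) : Polynomial ℂ) :
          PowerSeries ℂ)) := by
  rintro ⟨P, Q, hQ, hPQ⟩
  have hr1 : 1 < r := hr
  have hr0 : 0 < r := by omega
  set g : PowerSeries ℂ := seriesSum (fun h => PowerSeries.C (a ^ h) *
    ((A.comp (Polynomial.X ^ r ^ h) : Polynomial ℂ) : PowerSeries ℂ)) with hg
  set c : ℕ → ℂ := fun n => PowerSeries.coeff n g with hc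
  -- coefficient of each summand
  have hterm : ∀ h n : ℕ, PowerSeries.coeff n (PowerSeries.C (a ^ h) *
      ((A.comp (Polynomial.X ^ r ^ h) : Polynomial ℂ) : PowerSeries ℂ))
      = a ^ h * (if r ^ h ∣ n then A.coeff (n / r ^ h) else 0) := by
    intro h n
    rw [PowerSeries.coeff_C_mul, ← Polynomial.expand_eq_comp_X_pow,
      Polynomial.coeff_coe, Polynomial.coeff_expand (pow_pos hr0 h)]
  have hcn : ∀ n : ℕ, c n = ∑' h : ℕ,
      a ^ h * (if r ^ h ∣ n then A.coeff (n / r ^ h) else 0) := by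
    intro n
    simp only [hc, hg, seriesSum, PowerSeries.coeff_mk]
    exact tsum_congr (fun h => hterm h n)
  -- support localization
  have hsupp : ∀ h n : ℕ, r ^ h ∣ n → A.coeff (n / r ^ h) ≠ 0 →
      r ^ h ≤ n ∧ n ≤ (r - 1) * r ^ h := by
    intro h n hdvd hne
    obtain ⟨q, hq⟩ := hdvd
    have hdiv : n / r ^ h = q := by rw [hq, Nat.mul_div_cancel_left q (pow_pos hr0 h)]
    rw [hdiv] at hne
    have hq1 : 1 ≤ q := by
      rcases Nat.eq_zero_or_pos q with h0 | h0
      · rw [h0] at hne; exact absurd hA0 hne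
      · exact h0
    have hqr : q ≤ r - 1 := le_trans (Polynomial.le_natDegree_of_ne_zero hne) hdeg
    constructor
    · calc r ^ h = r ^ h * 1 := (mul_one _).symm
        _ ≤ r ^ h * q := Nat.mul_le_mul_left _ hq1
        _ = n := hq.symm
    · rw [hq, mul_comm]; exact Nat.mul_le_mul_right _ hqr
  have hlt : ∀ h n : ℕ, n ≤ (r - 1) * r ^ h → n < r ^ (h + 1) := by
    intro h n hn
    have : (r - 1) * r ^ h < r * r ^ h :=
      (Nat.mul_lt_mul_right (pow_pos hr0 h)).mpr (by omega)
    calc n ≤ (r - 1) * r ^ h := hn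
      _ < r * r ^ h := this
      _ = r ^ (h + 1) := by rw [pow_succ, mul_comm]
  have huniq : ∀ h h' n : ℕ, r ^ h ≤ n → n < r ^ (h + 1) →
      r ^ h' ≤ n → n < r ^ (h' + 1) → h = h' := by
    intro h h' n h1 h2 h3 h4
    have l1 : h < h' + 1 := by
      rw [← Nat.pow_lt_pow_iff_right hr1]; exact lt_of_le_of_lt h1 h4
    have l2 : h' < h + 1 := by
      rw [← Nat.pow_lt_pow_iff_right hr1]; exact lt_of_le_of_lt h3 h2
    omega
  -- value at support points
  have hval : ∀ j h : ℕ, 1 ≤ j → A.coeff j ≠ 0 → c (j * r ^ h) = a ^ h * A.coeff j := by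
    intro j h hj1 hjne
    rw [hcn]
    have hd : r ^ h ∣ j * r ^ h := dvd_mul_left _ _
    have hdiv : j * r ^ h / r ^ h = j := Nat.mul_div_cancel j (pow_pos hr0 h)
    rw [tsum_eq_single h ?_]
    · rw [if_pos hd, hdiv]
    · intro h' hne'
      by_cases hd' : r ^ h' ∣ j * r ^ h
      · rw [if_pos hd']
        by_cases hne2 : A.coeff (j * r ^ h / r ^ h') = 0
        · rw [hne2, mul_zero]
        · obtain ⟨s1, s2⟩ := hsupp h' (j * r ^ h) hd' hne2
          obtain ⟨t1, t2⟩ := hsupp h (j * r ^ h) hd (by rw [hdiv]; exact hjne)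
          exact absurd (huniq h' h (j * r ^ h) s1 (hlt _ _ s2) t1 (hlt _ _ t2)) hne'
      · rw [if_neg hd', mul_zero]
  -- vanishing outside support
  have hzero : ∀ n : ℕ, (∀ h, r ^ h ∣ n → A.coeff (n / r ^ h) = 0) → c n = 0 := by
    intro n hn
    rw [hcn]
    have : ∀ h : ℕ, a ^ h * (if r ^ h ∣ n then A.coeff (n / r ^ h) else 0) = 0 := by
      intro h
      by_cases hd : r ^ h ∣ n
      · rw [if_pos hd, hn h hd, mul_zero]
      · rw [if_neg hd, mul_zero]
    exact (tsum_congr this).trans tsum_zero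
  -- window of zeros
  have hwin : ∀ h k : ℕ, (r - 1) * r ^ h < k → k < r ^ (h + 1) → c k = 0 := by
    intro h k hk1 hk2
    apply hzero
    intro h' hd'
    by_contra hne
    obtain ⟨s1, s2⟩ := hsupp h' k hd' hne
    have hh' : h' ≤ h := by
      have : h' < h + 1 := by
        rw [← Nat.pow_lt_pow_iff_right hr1]; exact lt_of_le_of_lt s1 hk2
      omega
    have : k ≤ (r - 1) * r ^ h :=
      le_trans s2 (Nat.mul_le_mul_left _ (Nat.pow_le_pow_right (by omega) hh'))
    omega
  -- recurrence from rationality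
  have hrec0 : ∀ n : ℕ, P.natDegree < n →
      (∑ k ∈ Finset.range (n + 1), Q.coeff k * c (n - k)) = 0 := by
    intro n hn
    have h1 := congrArg (PowerSeries.coeff n) hPQ
    rw [PowerSeries.coeff_mul, Finset.Nat.sum_antidiagonal_eq_sum_range_succ_mk] at h1
    simp only [Polynomial.coeff_coe] at h1
    rw [Polynomial.coeff_eq_zero_of_natDegree_lt hn] at h1
    exact h1
  set v : ℕ := Q.natTrailingDegree with hv
  set d : ℕ := Q.natDegree with hd
  have hQv : Q.coeff v ≠ 0 := fun h => hQ (Polynomial.trailingCoeff_eq_zero.mp h)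
  have hvd : v ≤ d := Polynomial.natTrailingDegree_le_natDegree Q
  have hrec : ∀ m : ℕ, P.natDegree < m →
      (∀ i, v < i → i ≤ d → c (m + v - i) = 0) → c m = 0 := by
    intro m hm hzeros
    have hs := hrec0 (m + v) (by omega)
    rw [Finset.sum_eq_single v ?_ ?_] at hs
    · have : m + v - v = m := by omega
      rw [this] at hs
      exact (mul_eq_zero.mp hs).resolve_left hQv
    · intro k hk hkv
      rcases lt_or_gt_of_ne hkv with hlt2 | hgt
      · rw [Polynomial.coeff_eq_zero_of_lt_natTrailingDegree hlt2, zero_mul]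
      · by_cases hkd : k ≤ d
        · rw [hzeros k hgt hkd, mul_zero]
        · rw [Polynomial.coeff_eq_zero_of_natDegree_lt (by omega), zero_mul]
    · intro hv2
      exact absurd (Finset.mem_range.mpr (by omega)) hv2
  -- choose a large scale
  obtain ⟨h₀, hB⟩ : ∃ h₀ : ℕ, d + P.natDegree + 2 < r ^ h₀ :=
    ⟨d + P.natDegree + 2, Nat.lt_pow_self hr1⟩
  have hWE : (r - 1) * r ^ h₀ + r ^ h₀ = r ^ (h₀ + 1) := by
    rw [Nat.sub_one_mul, pow_succ, mul_comm (r ^ h₀) r]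
    exact Nat.sub_add_cancel (Nat.le_mul_of_pos_left _ hr0)
  have claim : ∀ m : ℕ, (r - 1) * r ^ h₀ + 1 ≤ m → c m = 0 := by
    have hwin' := hwin h₀
    rw [← hWE] at hwin'
    generalize r ^ h₀ = E at hwin' hB
    intro m
    induction m using Nat.strong_induction_on with
    | _ m ih =>
      intro hm
      by_cases hcase : m < (r - 1) * E + E
      · exact hwin' m (by omega) hcase
      · push_neg at hcase
        apply hrec m (by omega)
        intro i hi1 hi2
        have hlt3 : m + v - i < m := by omega
        apply ih _ hlt3
        omega
  -- a nonzero coefficient beyond the window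
  set N : ℕ := (r - 1) * r ^ h₀ + 1 with hN
  set j₀ : ℕ := A.natTrailingDegree with hj0
  have hj0ne : A.coeff j₀ ≠ 0 := fun h => hA (Polynomial.trailingCoeff_eq_zero.mp h)
  have hj01 : 1 ≤ j₀ := by
    rcases Nat.eq_zero_or_pos j₀ with h0 | h0
    · rw [h0] at hj0ne; exact absurd hA0 hj0ne
    · exact h0
  have hbig : N < r ^ N := Nat.lt_pow_self (n := N) hr1
  have hmN : N ≤ j₀ * r ^ N := by
    calc N ≤ r ^ N := le_of_lt hbig
      _ = 1 * r ^ N := (one_mul _).symm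
      _ ≤ j₀ * r ^ N := Nat.mul_le_mul_right _ hj01
  have h1 := hval j₀ N hj01 hj0ne
  rw [claim _ hmN] at h1
  exact (mul_ne_zero (pow_ne_zero _ ha) hj0ne) h1.symm
end
end
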